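/- arXiv:2003.06854 — 4 statements merged into one kernel-verified Lean document; each statement's English description precedes it below -/
import Mathlib

section
/- Let X and Y be Polish spaces, F ⊆ X × Y a Borel set, μ a Borel probability measure on X, and K₀ ⊆ proj_X(F) a compact set with μ(K₀) > 0. Then there exists a compact set K ⊆ F such that proj_X(K) ⊆ K₀ and μ(proj_X(K)) > 0. -/
open MeasureTheory Set Filter Topology ENNReal

section AuxDefs

variable {X : Type*} [MeasurableSpace X]

open Classical

/-- Given a set `S ⊆ ℕ^ℕ`, pick a bound `n` on the `k`-th coordinate keeping the
outer measure of `K₀ ∩ p '' S` above `m`, if possible. -/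
noncomputable def capNext (μ : Measure X) (K₀ : Set X) (p : (ℕ → ℕ) → X) (m : ℝ≥0∞)
    (S : Set (ℕ → ℕ)) (k : ℕ) : ℕ :=
  if hs : ∃ n, m < μ (K₀ ∩ p '' (S ∩ {σ | σ k ≤ n})) then hs.choose else 0

lemma capNext_spec {μ : Measure X} {K₀ : Set X} {p : (ℕ → ℕ) → X} {m : ℝ≥0∞}
    {S : Set (ℕ → ℕ)} {k : ℕ} (hs : ∃ n, m < μ (K₀ ∩ p '' (S ∩ {σ | σ k ≤ n}))) :
    m < μ (K₀ ∩ p '' (S ∩ {σ | σ k ≤ capNext μ K₀ p m S k})) := by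
  rw [capNext]
  rw [dif_pos hs]
  exact hs.choose_spec

/-- The decreasing sequence of cylinder sets in `ℕ^ℕ`. -/
noncomputable def capA (μ : Measure X) (K₀ : Set X) (p : (ℕ → ℕ) → X) (m : ℝ≥0∞) :
    ℕ → Set (ℕ → ℕ)
  | 0 => Set.univ
  | k + 1 => capA μ K₀ p m k ∩ {σ | σ k ≤ capNext μ K₀ p m (capA μ K₀ p m k) k}

lemma capA_mem {μ : Measure X} {K₀ : Set X} {p : (ℕ → ℕ) → X} {m : ℝ≥0∞} :
    ∀ (k : ℕ) (σ : ℕ → ℕ), σ ∈ capA μ K₀ p m k ↔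
      ∀ i < k, σ i ≤ capNext μ K₀ p m (capA μ K₀ p m i) i
  | 0, σ => by simp [capA]
  | k + 1, σ => by
    rw [capA, Set.mem_inter_iff, capA_mem k σ]
    constructor
    · rintro ⟨h1, h2⟩ i hi
      rcases Nat.lt_succ_iff_lt_or_eq.1 hi with hi | rfl
      · exact h1 i hi
      · exact h2
    · intro h
      exact ⟨fun i hi => h i (hi.trans (Nat.lt_succ_self k)), h k (Nat.lt_succ_self k)⟩

end AuxDefs

/-- If `x` is in the closure of the images of all the cylinder sets, then it is in the
image of the corresponding compact set of bounded sequences. -/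
lemma mem_image_of_mem_closure_cyl {X : Type*} [TopologicalSpace X] [PolishSpace X]
    (p : (ℕ → ℕ) → X) (hp : Continuous p) (b : ℕ → ℕ) (A : ℕ → Set (ℕ → ℕ))
    (hA : ∀ k, ∀ σ ∈ A k, ∀ i < k, σ i ≤ b i) (x : X)
    (hx : ∀ k, x ∈ closure (p '' A k)) :
    x ∈ p '' (Set.pi Set.univ fun i => Set.Iic (b i)) := by
  letI := TopologicalSpace.upgradeIsCompletelyMetrizable X
  have hx' : ∀ k : ℕ, ∃ σ, σ ∈ A (k + 1) ∧ dist x (p σ) < 1 / (k + 1) := by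
    intro k
    have := (Metric.mem_closure_iff.1 (hx (k + 1))) (1 / (k + 1)) (by positivity)
    obtain ⟨y, ⟨σ, hσ, rfl⟩, hdist⟩ := this
    exact ⟨σ, hσ, hdist⟩
  choose σ hσA hσd using hx'
  set M : Set (ℕ → ℕ) := Set.pi Set.univ fun i => Set.Iic (b i) with hM_def
  have hM : IsCompact M := isCompact_univ_pi fun i => (Set.finite_Iic (b i)).isCompact
  set τ : ℕ → (ℕ → ℕ) := fun k i => min (σ k i) (b i) with hτ_def
  have hτM : ∀ k, τ k ∈ M := fun k => by
    intro i _
    show min (σ k i) (b i) ∈ Set.Iic (b i)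
    exact min_le_right (σ k i) (b i)
  obtain ⟨σL, hσLM, φ, hφ, hconv⟩ := hM.tendsto_subseq hτM
  have htends : Tendsto (fun j => σ (φ j)) atTop (𝓝 σL) := by
    rw [tendsto_pi_nhds] at hconv ⊢
    intro i
    refine (hconv i).congr' ?_
    filter_upwards [eventually_ge_atTop i] with j hj
    have hij : i ≤ φ j := hj.trans (hφ.le_apply)
    have : σ (φ j) i ≤ b i := hA (φ j + 1) (σ (φ j)) (hσA (φ j)) i (Nat.lt_succ_of_le hij)
    simp [hτ_def, min_eq_left this]
  have hpx1 : Tendsto (fun j => p (σ (φ j))) atTop (𝓝 (p σL)) :=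
    (hp.tendsto σL).comp htends
  have hpx2 : Tendsto (fun j => p (σ (φ j))) atTop (𝓝 x) := by
    rw [tendsto_iff_dist_tendsto_zero]
    have h0 : Tendsto (fun j : ℕ => 1 / ((j : ℝ) + 1)) atTop (𝓝 0) :=
      tendsto_one_div_add_atTop_nhds_zero_nat
    refine squeeze_zero (fun j => dist_nonneg) (fun j => ?_) h0
    have h1 : dist (p (σ (φ j))) x < 1 / ((φ j : ℝ) + 1) := by
      rw [dist_comm]; exact hσd (φ j)
    have h2 : (1 : ℝ) / ((φ j : ℝ) + 1) ≤ 1 / ((j : ℝ) + 1) := by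
      apply one_div_le_one_div_of_le (by positivity)
      have : (j : ℝ) ≤ (φ j : ℝ) := by exact_mod_cast hφ.le_apply
      linarith
    exact (h1.le.trans h2)
  exact ⟨σL, hσLM, tendsto_nhds_unique hpx1 hpx2⟩

/-- If `F ⊆ X × Y` is Borel in a product of Polish spaces, `μ` is a Borel probability
measure on `X`, and `K₀ ⊆ proj_X F` is compact with `μ K₀ > 0`, then there is a compact
`K ⊆ F` with `proj_X K ⊆ K₀` and `μ (proj_X K) > 0`. -/
theorem compact_section_of_positive_measure
    {X Y : Type*} [TopologicalSpace X] [PolishSpace X] [MeasurableSpace X] [BorelSpace X]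
    [TopologicalSpace Y] [PolishSpace Y] [MeasurableSpace Y] [BorelSpace Y]
    (F : Set (X × Y)) (hF : MeasurableSet F)
    (μ : Measure X) [IsProbabilityMeasure μ]
    (K₀ : Set X) (hK₀ : IsCompact K₀) (hK₀F : K₀ ⊆ Prod.fst '' F) (hpos : 0 < μ K₀) :
    ∃ K : Set (X × Y), IsCompact K ∧ K ⊆ F ∧ Prod.fst '' K ⊆ K₀ ∧
      0 < μ (Prod.fst '' K) := by
  -- `F` is analytic: a continuous image of `ℕ → ℕ` (it is nonempty since `μ K₀ > 0`).
  have hFan : AnalyticSet F := hF.analyticSet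
  rw [AnalyticSet] at hFan
  rcases hFan with hFe | ⟨g, hg_cont, hg_range⟩
  · exfalso
    rw [hFe] at hK₀F
    simp only [Set.image_empty, Set.subset_empty_iff] at hK₀F
    rw [hK₀F] at hpos
    simp at hpos
  set p : (ℕ → ℕ) → X := fun σ => (g σ).1 with hp_def
  have hp_cont : Continuous p := continuous_fst.comp hg_cont
  set m : ℝ≥0∞ := μ K₀ / 2 with hm_def
  have hm0 : 0 < m := ENNReal.half_pos hpos.ne'
  have hmlt : m < μ K₀ := ENNReal.half_lt_self hpos.ne' (measure_ne_top μ K₀)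
  -- the key one-step lemma, by continuity of `μ` from below on arbitrary sets
  have key : ∀ (S : Set (ℕ → ℕ)) (k : ℕ), m < μ (K₀ ∩ p '' S) →
      ∃ n, m < μ (K₀ ∩ p '' (S ∩ {σ | σ k ≤ n})) := by
    intro S k hS
    have hmono : Monotone fun n : ℕ => K₀ ∩ p '' (S ∩ {σ | σ k ≤ n}) := by
      intro a b hab
      exact Set.inter_subset_inter_right _ (Set.image_mono
        (Set.inter_subset_inter_right _ fun σ hσ => le_trans hσ hab))
    have hunion : (⋃ n : ℕ, K₀ ∩ p '' (S ∩ {σ | σ k ≤ n})) = K₀ ∩ p '' S := by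
      rw [← Set.inter_iUnion, ← Set.image_iUnion, ← Set.inter_iUnion]
      have huniv : (⋃ n : ℕ, {σ : ℕ → ℕ | σ k ≤ n}) = Set.univ := by
        ext σ
        simp only [Set.mem_iUnion, Set.mem_setOf_eq, Set.mem_univ, iff_true]
        exact ⟨σ k, le_rfl⟩
      rw [huniv, Set.inter_univ]
    have := hmono.measure_iUnion (μ := μ)
    rw [hunion] at this
    rw [this] at hS
    exact lt_iSup_iff.1 hS
  set A : ℕ → Set (ℕ → ℕ) := capA μ K₀ p m with hA_def
  set b : ℕ → ℕ := fun k => capNext μ K₀ p m (A k) k with hb_def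
  have hAsucc : ∀ k, A (k + 1) = A k ∩ {σ | σ k ≤ b k} := fun k => rfl
  -- the invariant
  have hinv : ∀ k, m < μ (K₀ ∩ p '' A k) := by
    intro k
    induction k with
    | zero =>
      have : K₀ ∩ p '' (Set.univ : Set (ℕ → ℕ)) = K₀ := by
        rw [Set.image_univ]
        apply Set.inter_eq_self_of_subset_left
        intro x hx
        obtain ⟨z, hzF, hz1⟩ := hK₀F hx
        rw [← hg_range] at hzF
        obtain ⟨σ, rfl⟩ := hzF
        exact ⟨σ, hz1⟩
      show m < μ (K₀ ∩ p '' (Set.univ : Set (ℕ → ℕ)))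
      rw [this]; exact hmlt
    | succ k ih =>
      rw [hAsucc k]
      exact capNext_spec (key (A k) k ih)
  -- sequences below the chosen bounds
  set M : Set (ℕ → ℕ) := Set.pi Set.univ fun i => Set.Iic (b i) with hM_def
  have hM : IsCompact M := isCompact_univ_pi fun i => (Set.finite_Iic (b i)).isCompact
  have hA_char : ∀ k, ∀ σ ∈ A k, ∀ i < k, σ i ≤ b i := by
    intro k σ hσ i hi
    exact (capA_mem k σ).1 hσ i hi
  -- the decreasing compact-side sets
  set C : ℕ → Set X := fun k => K₀ ∩ closure (p '' A k) with hC_def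
  have hAanti : Antitone A := antitone_nat_of_succ_le fun k => by
    rw [hAsucc k]; exact Set.inter_subset_left
  have hCanti : Antitone C := fun a c hac =>
    Set.inter_subset_inter_right _ (closure_mono (Set.image_mono (hAanti hac)))
  have hCmeas : ∀ k, NullMeasurableSet (C k) μ :=
    fun k => (hK₀.measurableSet.inter isClosed_closure.measurableSet).nullMeasurableSet
  have hCm : ∀ k, m ≤ μ (C k) := fun k =>
    le_trans (hinv k).le (measure_mono
      (Set.inter_subset_inter_right _ subset_closure))
  have hiInter : m ≤ μ (⋂ k, C k) := by
    rw [hCanti.measure_iInter hCmeas ⟨0, measure_ne_top μ _⟩]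
    exact le_iInf hCm
  -- the intersection is inside `K₀ ∩ p '' M`
  have hsub : (⋂ k, C k) ⊆ K₀ ∩ p '' M := by
    intro x hx
    simp only [Set.mem_iInter, hC_def, Set.mem_inter_iff] at hx
    refine ⟨(hx 0).1, ?_⟩
    exact mem_image_of_mem_closure_cyl p hp_cont b A hA_char x fun k => (hx k).2
  -- the final compact set
  refine ⟨g '' M ∩ (K₀ ×ˢ Set.univ), ?_, ?_, ?_, ?_⟩
  · exact (hM.image hg_cont).inter_right ((hK₀.isClosed).prod isClosed_univ)
  · intro z hz
    obtain ⟨σ, _, rfl⟩ := hz.1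
    rw [← hg_range]
    exact Set.mem_range_self σ
  · rintro _ ⟨z, ⟨_, hz2⟩, rfl⟩
    exact hz2.1
  · have himg : K₀ ∩ p '' M ⊆ Prod.fst '' (g '' M ∩ K₀ ×ˢ Set.univ) := by
      rintro x ⟨hxK, σ, hσM, rfl⟩
      exact ⟨g σ, ⟨Set.mem_image_of_mem g hσM, hxK, Set.mem_univ _⟩, rfl⟩
    calc (0 : ℝ≥0∞) < m := hm0
      _ ≤ μ (⋂ k, C k) := hiInter
      _ ≤ μ (K₀ ∩ p '' M) := measure_mono hsub
      _ ≤ μ (Prod.fst '' (g '' M ∩ K₀ ×ˢ Set.univ)) := measure_mono himg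
end

section
/- Let f ∈ ω^ω be arbitrary. Then the set H(f) = {g ∈ ℤ^ω : |g(n)| ≤ f(n) for infinitely many n ∈ ω} is Haar-null in ℤ^ω. -/
open MeasureTheory Filter

noncomputable section

/-- A subset of `ℤ^ω` is universally measurable if it is measurable with respect to the
completion of every Borel probability measure on `ℤ^ω`. -/
def UnivMeasurable (U : Set (ℕ → ℤ)) : Prop :=
  ∀ μ : Measure (ℕ → ℤ), IsProbabilityMeasure μ → NullMeasurableSet U μ

/-- Christensen's notion: `S ⊆ ℤ^ω` is Haar-null if there are a universally measurable
`U ⊇ S` and a Borel probability measure `μ` with `μ (U + g) = 0` for every `g ∈ ℤ^ω`. -/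
def IsHaarNull (S : Set (ℕ → ℤ)) : Prop :=
  ∃ (U : Set (ℕ → ℤ)) (μ : Measure (ℕ → ℤ)),
    S ⊆ U ∧ UnivMeasurable U ∧ IsProbabilityMeasure μ ∧
    ∀ g : ℕ → ℤ, μ ((fun x => x + g) '' U) = 0

/-- Eventual domination `f ≤* g`: `f n ≤ g n` for all but finitely many `n`. -/
def EvLE (f g : ℕ → ℕ) : Prop := ∀ᶠ n in atTop, f n ≤ g n

/-- A dominating family in Baire space. -/
def Dominating (S : Set (ℕ → ℕ)) : Prop := ∀ f : ℕ → ℕ, ∃ g ∈ S, EvLE f g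

/-- `∏_{i<n} (b i + 1)`. -/
def basePow (b : ℕ → ℕ) (n : ℕ) : ℕ := ∏ i ∈ Finset.range n, (b i + 1)

/-- The digits of `x ∈ [0,1)` in the mixed-radix expansion with bases `b n + 1`;
the `n`-th digit is uniformly distributed on `{0, …, b n}`, and the digits are independent. -/
def digitMap (b : ℕ → ℕ) (x : ℝ) : ℕ → ℤ :=
  fun n => ⌊x * (basePow b (n + 1) : ℝ)⌋ - (b n + 1) * ⌊x * (basePow b n : ℝ)⌋

/-- `μ_b`: the product probability measure on `ℤ^ω` whose `n`-th factor is the uniform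
probability measure on `{0, 1, …, b n} ⊆ ℤ`, realized as the joint distribution of the
mixed-radix digits (with bases `b n + 1`) of a uniformly random point of `[0,1)`.
(Applied to an arbitrary set it gives the outer measure `μ_b^*`.) -/
def muB (b : ℕ → ℕ) : Measure (ℕ → ℤ) :=
  Measure.map (digitMap b) (volume.restrict (Set.Ico (0 : ℝ) 1))

end

/- ### Auxiliary lemmas -/

lemma basePow_pos (b : ℕ → ℕ) (n : ℕ) : 0 < basePow b n :=
  Finset.prod_pos fun _ _ => Nat.succ_pos _

lemma basePow_succ (b : ℕ → ℕ) (n : ℕ) : basePow b (n+1) = basePow b n * (b n + 1) :=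
  Finset.prod_range_succ _ _

lemma measurable_digitMap (b : ℕ → ℕ) : Measurable (digitMap b) := by
  apply measurable_pi_lambda
  intro n
  exact ((measurable_id.mul_const _).floor).sub
    (((measurable_id.mul_const _).floor).const_mul _)

lemma measurableSet_infinite (f : ℕ → ℕ) (g : ℕ → ℤ) :
    MeasurableSet {h : ℕ → ℤ | {n : ℕ | |h n - g n| ≤ (f n : ℤ)}.Infinite} := by
  have h1 : {h : ℕ → ℤ | {n : ℕ | |h n - g n| ≤ (f n : ℤ)}.Infinite}
      = ⋂ N, ⋃ n, ⋃ _ : N ≤ n, {h : ℕ → ℤ | |h n - g n| ≤ (f n : ℤ)} := by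
    ext h
    simp only [Set.mem_setOf_eq, Set.mem_iInter, Set.mem_iUnion,
      ← Nat.frequently_atTop_iff_infinite, frequently_atTop, ge_iff_le, exists_prop]
  rw [h1]
  refine MeasurableSet.iInter fun N => MeasurableSet.iUnion fun n =>
    MeasurableSet.iUnion fun _ => ?_
  have h2 : {h : ℕ → ℤ | |h n - g n| ≤ (f n : ℤ)}
      = (fun h : ℕ → ℤ => h n) ⁻¹' {z : ℤ | |z - g n| ≤ (f n : ℤ)} := rfl
  rw [h2]
  exact (measurable_pi_apply n) (Set.to_countable _).measurableSet

/-- Key estimate: the event that the `n`-th digit lies within `f n` of `g n` has measure at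
most `(#digits in window) / (base)` — bounded via a covering by intervals of length
`1 / basePow b (n+1)`. -/
lemma digit_event_bound (b : ℕ → ℕ) (f : ℕ → ℕ) (g : ℕ → ℤ) (n : ℕ) :
    (volume.restrict (Set.Ico (0:ℝ) 1)) {x : ℝ | |digitMap b x n - g n| ≤ (f n : ℤ)}
      ≤ (basePow b n * (2 * f n + 1) : ℕ)
          * ENNReal.ofReal (1 / (basePow b (n+1) : ℝ)) := by
  have hPn : (0:ℝ) < (basePow b n : ℝ) := by exact_mod_cast basePow_pos b n
  have hPn1 : (0:ℝ) < (basePow b (n+1) : ℝ) := by exact_mod_cast basePow_pos b (n+1)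
  have hmeas : MeasurableSet {x : ℝ | |digitMap b x n - g n| ≤ (f n : ℤ)} := by
    have h2 : {x : ℝ | |digitMap b x n - g n| ≤ (f n : ℤ)}
        = (fun x : ℝ => digitMap b x n) ⁻¹' {z : ℤ | |z - g n| ≤ (f n : ℤ)} := rfl
    rw [h2]
    exact ((measurable_pi_apply n).comp (measurable_digitMap b))
      (Set.to_countable _).measurableSet
  rw [Measure.restrict_apply hmeas]
  set T : Finset (ℕ × ℤ) :=
    Finset.range (basePow b n) ×ˢ Finset.Icc (g n - f n) (g n + f n) with hT
  have hcover : {x : ℝ | |digitMap b x n - g n| ≤ (f n : ℤ)} ∩ Set.Ico (0:ℝ) 1 ⊆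
      ⋃ p ∈ T, Set.Ico ((((p.1 : ℤ) * (b n + 1) + p.2 : ℤ) : ℝ) / (basePow b (n+1) : ℝ))
        (((((p.1 : ℤ) * (b n + 1) + p.2 : ℤ) : ℝ) + 1) / (basePow b (n+1) : ℝ)) := by
    rintro x ⟨hx, hx0, hx1⟩
    set m : ℤ := ⌊x * (basePow b n : ℝ)⌋ with hm
    set N : ℤ := ⌊x * (basePow b (n+1) : ℝ)⌋ with hN
    have hm0 : 0 ≤ m := Int.floor_nonneg.2 (by positivity)
    have hmlt : m < (basePow b n : ℤ) := by
      rw [hm, Int.floor_lt]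
      push_cast
      nlinarith
    have hd : digitMap b x n = N - (b n + 1) * m := rfl
    refine Set.mem_iUnion₂.2 ⟨(m.toNat, digitMap b x n), ?_, ?_⟩
    · rw [hT, Finset.mem_product]
      constructor
      · rw [Finset.mem_range]
        omega
      · rw [Finset.mem_Icc]
        rw [Set.mem_setOf_eq, abs_le] at hx
        constructor <;> linarith [hx.1, hx.2]
    · have hval : ((m.toNat : ℤ) * (b n + 1) + digitMap b x n) = N := by
        rw [hd, Int.toNat_of_nonneg hm0]; ring
      rw [hval]
      have h1 : (N : ℝ) ≤ x * (basePow b (n+1) : ℝ) := Int.floor_le _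
      have h2 : x * (basePow b (n+1) : ℝ) < N + 1 := Int.lt_floor_add_one _
      constructor
      · rw [div_le_iff₀ hPn1]; linarith
      · rw [lt_div_iff₀ hPn1]; linarith
  calc volume ({x : ℝ | |digitMap b x n - g n| ≤ (f n : ℤ)} ∩ Set.Ico (0:ℝ) 1)
      ≤ volume (⋃ p ∈ T, Set.Ico ((((p.1 : ℤ) * (b n + 1) + p.2 : ℤ) : ℝ) / (basePow b (n+1) : ℝ))
        (((((p.1 : ℤ) * (b n + 1) + p.2 : ℤ) : ℝ) + 1) / (basePow b (n+1) : ℝ))) :=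
        measure_mono hcover
    _ ≤ ∑ p ∈ T, volume (Set.Ico ((((p.1 : ℤ) * (b n + 1) + p.2 : ℤ) : ℝ) / (basePow b (n+1) : ℝ))
        (((((p.1 : ℤ) * (b n + 1) + p.2 : ℤ) : ℝ) + 1) / (basePow b (n+1) : ℝ))) :=
        measure_biUnion_finset_le T _
    _ = ∑ _p ∈ T, ENNReal.ofReal (1 / (basePow b (n+1) : ℝ)) := by
        refine Finset.sum_congr rfl fun p _ => ?_
        rw [Real.volume_Ico]
        congr 1
        rw [div_sub_div_same]
        ring_nf
    _ = T.card * ENNReal.ofReal (1 / (basePow b (n+1) : ℝ)) := by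
        rw [Finset.sum_const, nsmul_eq_mul]
    _ ≤ (basePow b n * (2 * f n + 1) : ℕ) * ENNReal.ofReal (1 / (basePow b (n+1) : ℝ)) := by
        apply mul_le_mul_left
        have : T.card = basePow b n * (2 * f n + 1) := by
          rw [hT, Finset.card_product, Finset.card_range, Int.card_Icc]
          congr 1
          omega
        rw [this]

/-- For every `f ∈ ω^ω`, the set `H(f) = {g ∈ ℤ^ω : |g(n)| ≤ f(n) for infinitely many n}`
is Haar-null in `ℤ^ω`. -/
theorem haarNull_of_infinitely_often_bounded (f : ℕ → ℕ) :
    IsHaarNull {g : ℕ → ℤ | {n : ℕ | |g n| ≤ (f n : ℤ)}.Infinite} := by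
  set b : ℕ → ℕ := fun n => (2 * f n + 1) * 2 ^ (n + 1) - 1 with hb
  have hB : ∀ n, b n + 1 = (2 * f n + 1) * 2 ^ (n + 1) := by
    intro n
    have h1 : 1 ≤ (2 * f n + 1) * 2 ^ (n + 1) := Nat.one_le_iff_ne_zero.2 (by positivity)
    show (2 * f n + 1) * 2 ^ (n + 1) - 1 + 1 = (2 * f n + 1) * 2 ^ (n + 1)
    omega
  have hU : {g : ℕ → ℤ | {n : ℕ | |g n| ≤ (f n : ℤ)}.Infinite}
      = {h : ℕ → ℤ | {n : ℕ | |h n - (0:ℕ→ℤ) n| ≤ (f n : ℤ)}.Infinite} := by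
    simp
  have hresprob : IsProbabilityMeasure (volume.restrict (Set.Ico (0:ℝ) 1)) := by
    constructor
    rw [Measure.restrict_apply_univ, Real.volume_Ico]
    norm_num
  refine ⟨_, muB b, subset_rfl, ?_, ?_, ?_⟩
  · intro ν _
    rw [hU]
    exact (measurableSet_infinite f 0).nullMeasurableSet
  · exact Measure.isProbabilityMeasure_map (measurable_digitMap b).aemeasurable
  · intro g
    have himg : (fun x => x + g) '' {h : ℕ → ℤ | {n : ℕ | |h n| ≤ (f n : ℤ)}.Infinite}
        = {h : ℕ → ℤ | {n : ℕ | |h n - g n| ≤ (f n : ℤ)}.Infinite} := by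
      ext h
      constructor
      · rintro ⟨x, hx, rfl⟩
        simpa using hx
      · intro hh
        refine ⟨h - g, by simpa using hh, by ext i; simp⟩
    rw [himg, muB, Measure.map_apply (measurable_digitMap b) (measurableSet_infinite f g)]
    have hpre : digitMap b ⁻¹' {h : ℕ → ℤ | {n : ℕ | |h n - g n| ≤ (f n : ℤ)}.Infinite}
        = {x : ℝ | ∃ᶠ n in atTop, |digitMap b x n - g n| ≤ (f n : ℤ)} := by
      ext x
      simp only [Set.mem_preimage, Set.mem_setOf_eq, ← Nat.frequently_atTop_iff_infinite]
    rw [hpre]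
    apply measure_setOf_frequently_eq_zero
    have hbound : ∀ n, (volume.restrict (Set.Ico (0:ℝ) 1))
        {x : ℝ | |digitMap b x n - g n| ≤ (f n : ℤ)} ≤ (2⁻¹ : ENNReal) ^ n := by
      intro n
      refine le_trans (digit_event_bound b f g n) ?_
      set A : ℕ := basePow b n * (2 * f n + 1) with hA
      have hA0 : 0 < A := by
        have := basePow_pos b n
        positivity
      have hP1 : basePow b (n+1) = A * 2 ^ (n + 1) := by
        rw [basePow_succ, hB, hA]; ring
      have hre : (A : ℝ) * (1 / (basePow b (n+1) : ℝ)) = (1/2) ^ (n+1) := by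
        rw [hP1]
        push_cast
        rw [div_pow, one_pow]
        field_simp
      calc (A : ENNReal) * ENNReal.ofReal (1 / (basePow b (n+1) : ℝ))
          = ENNReal.ofReal ((A : ℝ) * (1 / (basePow b (n+1) : ℝ))) := by
            rw [ENNReal.ofReal_mul (by positivity), ENNReal.ofReal_natCast]
        _ = ENNReal.ofReal ((1/2 : ℝ) ^ (n+1)) := by rw [hre]
        _ = (2⁻¹ : ENNReal) ^ (n+1) := by
            rw [ENNReal.ofReal_pow (by norm_num)]
            congr 1
            rw [one_div, ENNReal.ofReal_inv_of_pos two_pos, ENNReal.ofReal_ofNat]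
        _ ≤ (2⁻¹ : ENNReal) ^ n := by
            rw [pow_succ]
            exact mul_le_of_le_one_right' (by norm_num)
    refine ne_top_of_le_ne_top ?_ (ENNReal.tsum_le_tsum hbound)
    rw [ENNReal.tsum_geometric]
    simp [ENNReal.one_sub_inv_two]
end

section
/- Let W be a W-system and T ⊆ ω^{<ω} a Laver tree. Then the set C_{T,W} is a dominating subset of ω^ω. -/
/-- `res x n` is the restriction `x↾n` of `x : ω^ω` to its first `n` coordinates,
viewed as a finite sequence. -/
def res (x : ℕ → ℕ) (n : ℕ) : List ℕ := List.ofFn (fun i : Fin n => x i)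

/-- A tree on `ω`: a set of finite sequences closed under initial segments. -/
def IsTree (T : Set (List ℕ)) : Prop := ∀ σ τ : List ℕ, σ <+: τ → τ ∈ T → σ ∈ T

/-- The set `[T]` of infinite branches of `T`. -/
def branches (T : Set (List ℕ)) : Set (ℕ → ℕ) := {x | ∀ n : ℕ, res x n ∈ T}

/-- A W-system `W = {w_σ, s_σ : σ ∈ ω^{<ω}}`: finite sets `w_σ ⊆ ω`, a function `s_∅`
with finite domain `d ⊆ ω`, and for each nonempty `σ = τ⌢(m)` a function
`s_σ : w_τ → ω` with `s_σ(i) > m` for all `i ∈ w_τ`; moreover, for every `x ∈ ω^ω`,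
`ω` is the disjoint union of `d` and the sets `w_{x↾n}`, `n ∈ ω`.
(The functions `s_σ` are modeled as total functions `ℕ → ℕ`; only their values on the
respective domains matter.) -/
structure WSystem where
  /-- the finite set `w_σ` -/
  w : List ℕ → Finset ℕ
  /-- the (finite) domain `d` of `s_∅` -/
  d : Finset ℕ
  /-- the function `s_∅ : d → ω` -/
  sEmpty : ℕ → ℕ
  /-- the function `s_σ : w_{σ↾(lh σ − 1)} → ω` for nonempty `σ` -/
  s : List ℕ → ℕ → ℕ
  /-- for nonempty `σ = τ⌢(m)` and `i ∈ w_τ` we have `s_σ(i) > σ(lh σ − 1) = m` -/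
  s_gt : ∀ (τ : List ℕ) (m : ℕ), ∀ i ∈ w τ, m < s (τ ++ [m]) i
  /-- for every `x ∈ ω^ω`, `ω` is the disjoint union of `d` and the `w_{x↾n}`, `n ∈ ω` -/
  cover : ∀ (x : ℕ → ℕ) (k : ℕ),
    (k ∈ d ∧ ∀ n : ℕ, k ∉ w (res x n)) ∨ (k ∉ d ∧ ∃! n : ℕ, k ∈ w (res x n))

/-- The set `C_{T,W}` of all `y ∈ ω^ω` extending `s_∅` such that for some branch
`x ∈ [T]` we have `y↾w_{x↾n} = s_{x↾(n+1)}` for every `n`. -/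
def CTW (W : WSystem) (T : Set (List ℕ)) : Set (ℕ → ℕ) :=
  {y | (∀ i ∈ W.d, y i = W.sEmpty i) ∧
    ∃ x ∈ branches T, ∀ n : ℕ, ∀ i ∈ W.w (res x n), y i = W.s (res x (n + 1)) i}

open Filter

/-- A Laver tree: a nonempty tree with a stem (a node comparable with every node of the
tree) above which every node has infinitely many immediate successors in the tree. -/
def IsLaverTree (T : Set (List ℕ)) : Prop :=
  IsTree T ∧ ∃ stem ∈ T,
    (∀ t ∈ T, t <+: stem ∨ stem <+: t) ∧
    ∀ t ∈ T, stem <+: t → {n : ℕ | t ++ [n] ∈ T}.Infinite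

/-- For any W-system `W` and Laver tree `T`, the set `C_{T,W}` is dominating in `ω^ω`. -/
theorem CTW_dominating_of_laver (W : WSystem) (T : Set (List ℕ)) (hT : IsLaverTree T) :
    Dominating (CTW W T) := by
  classical
  obtain ⟨hTree, stem, hstemT, _hcomp, hsplit⟩ := hT
  intro f
  set L := stem.length with hL
  -- choose a successor with large value above each node extending the stem
  have hstep' : ∀ t : List ℕ, ∃ n : ℕ,
      t ∈ T → stem <+: t → (t ++ [n] ∈ T ∧ (W.w t).sup f ≤ n) := by
    intro t
    by_cases h : t ∈ T ∧ stem <+: t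
    · obtain ⟨n, hn, hlt⟩ := (hsplit t h.1 h.2).exists_gt ((W.w t).sup f)
      exact ⟨n, fun _ _ => ⟨hn, hlt.le⟩⟩
    · exact ⟨0, fun h1 h2 => absurd ⟨h1, h2⟩ h⟩
  choose step hstep using hstep'
  -- the increasing sequence of nodes
  set g : ℕ → List ℕ := fun k => Nat.rec stem (fun _ t => t ++ [step t]) k with hgdef
  have hgsucc : ∀ k, g (k + 1) = g k ++ [step (g k)] := fun k => rfl
  have hg : ∀ k, g k ∈ T ∧ stem <+: g k ∧ (g k).length = L + k := by
    intro k
    induction k with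
    | zero => exact ⟨hstemT, List.prefix_refl _, rfl⟩
    | succ k ih =>
      obtain ⟨h1, h2, h3⟩ := ih
      have hst := hstep (g k) h1 h2
      refine ⟨hst.1, h2.trans ⟨[step (g k)], rfl⟩, ?_⟩
      rw [hgsucc, List.length_append, h3]; rfl
  have hgmono : ∀ j k, j ≤ k → g j <+: g k := by
    intro j k hjk
    induction k with
    | zero => simp [Nat.le_zero.mp hjk]
    | succ k ih =>
      rcases Nat.lt_or_ge j (k + 1) with h | h
      · exact (ih (Nat.lt_succ_iff.mp h)).trans ⟨[step (g k)], rfl⟩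
      · have : j = k + 1 := le_antisymm hjk h
        simp [this]
  -- the branch
  set x : ℕ → ℕ := fun m => (g (m + 1)).getD m 0 with hxdef
  have hxval : ∀ m k, m < L + k → (g k).getD m 0 = x m := by
    intro m k hm
    have hmk : m < (g k).length := by rw [(hg k).2.2]; exact hm
    have hm1 : m < (g (m + 1)).length := by rw [(hg (m + 1)).2.2]; omega
    show (g k).getD m 0 = (g (m + 1)).getD m 0
    rw [List.getD_eq_getElem _ _ hmk, List.getD_eq_getElem _ _ hm1]
    rcases le_or_gt k (m + 1) with h | h
    · exact List.IsPrefix.getElem (hgmono k (m + 1) h) hmk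
    · exact (List.IsPrefix.getElem (hgmono (m + 1) k h.le) hm1).symm
  have hsucc : ∀ n, res x (n + 1) = res x n ++ [x n] := by
    intro n
    rw [res, List.ofFn_succ', List.concat_eq_append]
    rfl
  have hres : ∀ n, res x n = (g n).take n := by
    intro n
    induction n with
    | zero => simp [res]
    | succ n ih =>
      have hlen : n < (g (n + 1)).length := by rw [(hg (n + 1)).2.2]; omega
      have hlenn : n ≤ (g n).length := by rw [(hg n).2.2]; omega
      rw [hsucc, ih, List.take_succ, hgsucc, List.take_append_of_le_length hlenn]
      congr 1
      have h1 : (g n ++ [step (g n)])[n]? = some ((g (n + 1)).getD n 0) := by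
        rw [List.getElem?_eq_getElem (by rw [← hgsucc]; exact hlen),
          List.getD_eq_getElem _ _ hlen]
      rw [h1]
      rfl
  have hbranch : x ∈ branches T := by
    intro n
    rw [hres n]
    exact hTree _ _ (List.take_prefix _ _) (hg n).1
  -- restriction at L + k is exactly g k
  have hresL : ∀ k, res x (L + k) = g k := by
    intro k
    rw [hres]
    obtain ⟨r, hr⟩ := hgmono k (L + k) (Nat.le_add_left _ _)
    have hlk : (g k).length = L + k := (hg k).2.2
    rw [← hr, ← hlk, List.take_left]
  -- the dominating real
  set y : ℕ → ℕ := fun i =>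
    if i ∈ W.d then W.sEmpty i
    else if h : ∃ n, i ∈ W.w (res x n) then W.s (res x (h.choose + 1)) i else 0 with hydef
  have hy2 : ∀ n : ℕ, ∀ i ∈ W.w (res x n), y i = W.s (res x (n + 1)) i := by
    intro n i hi
    rcases W.cover x i with ⟨_, hnone⟩ | ⟨hid, m, hm, huniq⟩
    · exact absurd hi (hnone n)
    · have hex : ∃ n, i ∈ W.w (res x n) := ⟨n, hi⟩
      have h1 : hex.choose = m := huniq _ hex.choose_spec
      have h2 : n = m := huniq _ hi
      rw [hydef]
      simp only [if_neg hid, dif_pos hex, h1, h2]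
  have hyC : y ∈ CTW W T := by
    refine ⟨fun i hi => by simp [hydef, if_pos hi], x, hbranch, hy2⟩
  refine ⟨y, hyC, ?_⟩
  -- finitely many exceptions
  set E : Finset ℕ := W.d ∪ (Finset.range L).biUnion (fun n => W.w (res x n)) with hE
  rw [EvLE, Filter.eventually_atTop]
  refine ⟨E.sup id + 1, fun k hk => ?_⟩
  have hkE : k ∉ E := fun h => by
    have h2 := Finset.le_sup (f := id) h
    simp only [id] at h2
    omega
  rcases W.cover x k with ⟨hkd, _⟩ | ⟨_, n, hn, _⟩
  · exact absurd (Finset.mem_union_left _ hkd) hkE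
  · have hnL : L ≤ n := by
      by_contra h
      exact hkE (Finset.mem_union_right _
        (Finset.mem_biUnion.mpr ⟨n, Finset.mem_range.mpr (by omega), hn⟩))
    have hresn : res x n = g (n - L) := by
      have h3 := hresL (n - L); rwa [Nat.add_sub_cancel' hnL] at h3
    -- value of x at n is the chosen step
    have hxn : x n = step (g (n - L)) := by
      have hlen : (g (n - L)).length = n := by rw [(hg (n - L)).2.2]; omega
      have h1 : (g (n - L + 1)).getD n 0 = x n :=
        hxval n (n - L + 1) (by omega)
      rw [← h1, hgsucc]
      rw [List.getD_eq_getElem _ _ (by simp [List.length_append, hlen])]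
      simp [List.getElem_append_right, hlen]
    have hbig : (W.w (res x n)).sup f ≤ x n := by
      rw [hresn, hxn]
      exact (hstep (g (n - L)) (hg _).1 (hg _).2.1).2
    have hfk : f k ≤ x n := le_trans (Finset.le_sup hn) hbig
    have hgt : x n < W.s (res x (n + 1)) k := by
      rw [hsucc]; exact W.s_gt (res x n) (x n) k hn
    rw [hy2 n k hn]
    omega
end

section
/- Let F ⊆ ℤ^ω × ω^ω be a closed set whose projection A = proj_{ℤ^ω}(F) is not Haar-null, and let ψ : 2^ω → K(ℤ^ω × ω^ω) be any bijection from the Cantor space onto the family of compact subsets of ℤ^ω × ω^ω. Define a partial map φ on triples (b,t,c) ∈ ω^ω × ℤ^ω × ℤ^ω by: (b,t,c) ∈ dom(φ) iff (1) c − t ∈ 2^ω (i.e., every coordinate of c − t is 0 or 1), (2) 2b(n) ≤ |t(n)| for all but finitely many n, (3) proj_{ℤ^ω}(ψ(c−t)) ⊆ Π_{n∈ω}[0, b(n)], and (4) μ_b(proj_{ℤ^ω}(ψ(c−t))) > 0; and in that case φ(b,t,c) = ψ(c−t) +^p t = {(r+t, x) : (r,x) ∈ ψ(c−t)}. Let bij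 : ω^ω → ω^ω × ℤ^ω × ℤ^ω be the homeomorphism given by bij(f)(0)(n) = f(3n) and, for i ∈ {1,2}, bij(f)(i)(n) = f(3n+i)/2 if f(3n+i) is even and −(f(3n+i)+1)/2 if f(3n+i) is odd. Then the set D = {f ∈ ω^ω : bij(f) ∈ dom(φ) and φ(bij(f)) ⊆ F} is a dominating subset of ω^ω. -/
open MeasureTheory Filter

/-- The standard bijection `ℕ → ℤ` sending even `k` to `k/2` and odd `k` to `−(k+1)/2`. -/
def natToInt (k : ℕ) : ℤ :=
  if k % 2 = 0 then ((k / 2 : ℕ) : ℤ) else -(((k + 1) / 2 : ℕ) : ℤ)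

/-- The homeomorphism `bij : ω^ω → ω^ω × ℤ^ω × ℤ^ω`,
`bij(f) = (n ↦ f(3n), n ↦ natToInt (f(3n+1)), n ↦ natToInt (f(3n+2)))`. -/
def bijMap (f : ℕ → ℕ) : (ℕ → ℕ) × (ℕ → ℤ) × (ℕ → ℤ) :=
  (fun n => f (3 * n), fun n => natToInt (f (3 * n + 1)), fun n => natToInt (f (3 * n + 2)))

open Set Topology
open scoped ENNReal NNReal

noncomputable section

namespace CSD

abbrev P2 := (ℕ → ℤ) × (ℕ → ℕ)


variable {b : ℕ → ℕ}

lemma basePow_succ (b : ℕ → ℕ) (n : ℕ) : basePow b (n+1) = basePow b n * (b n + 1) :=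
  Finset.prod_range_succ _ _

lemma basePow_pos (b : ℕ → ℕ) (n : ℕ) : 0 < basePow b n :=
  Finset.prod_pos fun i _ => Nat.succ_pos _

/-- floor of x * basePow -/
def Dfl (b : ℕ → ℕ) (n : ℕ) (x : ℝ) : ℤ := ⌊x * (basePow b n : ℝ)⌋

lemma digit_eq (x : ℝ) (n : ℕ) : digitMap b x n = Dfl b (n+1) x - (b n + 1) * Dfl b n x := rfl

lemma euclid {B u v u' v' : ℤ} (h : (B+1)*u + v = (B+1)*u' + v')
    (hv0 : 0 ≤ v) (hv1 : v ≤ B) (hv0' : 0 ≤ v') (hv1' : v' ≤ B) : u = u' ∧ v = v' := by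
  have h1 : (B+1)*(u-u') = v' - v := by
    have hm := mul_sub (B+1) u u'
    linarith
  have hu : u = u' := by
    by_contra h0
    have h3 : 1 ≤ |u - u'| := Int.one_le_abs (sub_ne_zero.mpr h0)
    have h4 : B + 1 ≤ |(B+1)*(u-u')| := by
      rw [abs_mul, abs_of_nonneg (by linarith : (0:ℤ) ≤ B + 1)]
      nlinarith
    have h5 : |v' - v| ≤ B := abs_le.mpr ⟨by linarith, by linarith⟩
    rw [h1] at h4
    linarith
  refine ⟨hu, ?_⟩
  rw [hu] at h
  linarith

lemma digit_range {x : ℝ} (hx : 0 ≤ x) (n : ℕ) :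
    0 ≤ digitMap b x n ∧ digitMap b x n ≤ b n := by
  have hB : (0:ℝ) < (basePow b n : ℝ) := by exact_mod_cast basePow_pos b n
  have hrw : x * (basePow b (n+1) : ℝ) = (x * (basePow b n : ℝ)) * ((b n : ℝ) + 1) := by
    rw [basePow_succ]; push_cast; ring
  have hy : (0:ℝ) ≤ x * (basePow b n : ℝ) := mul_nonneg hx hB.le
  have hfl := Int.floor_le (x * (basePow b n : ℝ))
  have hfu := Int.lt_floor_add_one (x * (basePow b n : ℝ))
  have h2 : ((b n : ℤ) + 1) * ⌊x * (basePow b n : ℝ)⌋ ≤ ⌊x * (basePow b (n+1) : ℝ)⌋ := by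
    rw [hrw]; apply Int.le_floor.mpr; push_cast; nlinarith
  have h3 : ⌊x * (basePow b (n+1) : ℝ)⌋ < ((b n : ℤ) + 1) * ⌊x * (basePow b n : ℝ)⌋
      + ((b n : ℤ) + 1) := by
    rw [hrw]; apply Int.floor_lt.mpr; push_cast; nlinarith
  simp only [digitMap]
  constructor
  · linarith
  · linarith

lemma measurable_digitMap (b : ℕ → ℕ) : Measurable (digitMap b) := by
  apply measurable_pi_lambda
  intro n
  exact (Int.measurable_floor.comp (measurable_id.mul_const _)).sub
    ((Int.measurable_floor.comp (measurable_id.mul_const _)).const_mul _)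

instance muB_prob (b : ℕ → ℕ) : IsProbabilityMeasure (muB b) := by
  have : IsProbabilityMeasure (volume.restrict (Set.Ico (0:ℝ) 1)) := by
    constructor
    simp [Measure.restrict_apply, Real.volume_Ico]
  exact Measure.isProbabilityMeasure_map (measurable_digitMap b).aemeasurable

/-- The encoded integer of a digit string. -/
def code (b : ℕ → ℕ) (a : ℕ → ℤ) : ℕ → ℤ
  | 0 => 0
  | (n+1) => (b n + 1) * code b a n + a n

lemma code_range {a : ℕ → ℤ} {n : ℕ} (h : ∀ i < n, 0 ≤ a i ∧ a i ≤ b i) :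
    0 ≤ code b a n ∧ code b a n < basePow b n := by
  induction n with
  | zero => simp [code, basePow]
  | succ n ih =>
      have h1 := ih (fun i hi => h i (Nat.lt_succ_of_lt hi))
      have h2 := h n (Nat.lt_succ_self n)
      have hB : (basePow b (n+1) : ℤ) = (basePow b n : ℤ) * (b n + 1) := by
        rw [basePow_succ]; push_cast; ring
      constructor
      · simp only [code]; nlinarith [h1.1, h2.1]
      · simp only [code]; nlinarith [h1.2, h2.2]

lemma Dfl_zero {x : ℝ} (hx : x ∈ Set.Ico (0:ℝ) 1) : Dfl b 0 x = 0 := by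
  simp only [Dfl, basePow]
  simp only [Finset.range_zero, Finset.prod_empty, Nat.cast_one, mul_one]
  exact Int.floor_eq_zero_iff.mpr (by simpa [Set.mem_Ico] using hx)

lemma Dfl_succ (x : ℝ) (n : ℕ) :
    Dfl b (n+1) x = (b n + 1) * Dfl b n x + digitMap b x n := by
  simp [digit_eq]

lemma digits_iff_code {x : ℝ} (hx : x ∈ Set.Ico (0:ℝ) 1) {a : ℕ → ℤ} {n : ℕ}
    (h : ∀ i < n, 0 ≤ a i ∧ a i ≤ b i) :
    (∀ i < n, digitMap b x i = a i) ↔ Dfl b n x = code b a n := by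
  induction n with
  | zero => simp [Dfl_zero hx, code]
  | succ n ih =>
      have hsub : ∀ i < n, 0 ≤ a i ∧ a i ≤ b i := fun i hi => h i (Nat.lt_succ_of_lt hi)
      have han := h n (Nat.lt_succ_self n)
      have hdr := digit_range (b := b) hx.1 n
      constructor
      · intro hd
        have h1 : Dfl b n x = code b a n := (ih hsub).mp (fun i hi => hd i (Nat.lt_succ_of_lt hi))
        rw [Dfl_succ, h1, hd n (Nat.lt_succ_self n)]; rfl
      · intro hD
        have heq : (↑(b n) + 1) * Dfl b n x + digitMap b x n
            = (↑(b n) + 1) * code b a n + a n := by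
          rw [← Dfl_succ, hD]; rfl
        obtain ⟨h1, h2⟩ := euclid heq hdr.1 hdr.2 han.1 han.2
        intro i hi
        rcases Nat.lt_succ_iff_lt_or_eq.mp hi with hi' | rfl
        · exact (ih hsub).mpr h1 i hi'
        · exact h2

lemma Dfl_set {r : ℤ} {n : ℕ} (hr0 : 0 ≤ r) (hr1 : r < basePow b n) :
    {x ∈ Set.Ico (0:ℝ) 1 | Dfl b n x = r}
      = Set.Ico ((r : ℝ) / (basePow b n : ℝ)) (((r : ℝ) + 1) / (basePow b n : ℝ)) := by
  have hB : (0:ℝ) < (basePow b n : ℝ) := by exact_mod_cast basePow_pos b n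
  ext x
  simp only [Set.mem_setOf_eq, Set.mem_Ico]
  constructor
  · rintro ⟨⟨hx0, hx1⟩, hD⟩
    have hD' : ⌊x * (basePow b n : ℝ)⌋ = r := hD
    obtain ⟨h1, h2⟩ := Int.floor_eq_iff.mp hD'
    constructor
    · rw [div_le_iff₀ hB]; linarith
    · rw [lt_div_iff₀ hB]; push_cast at h2 ⊢; linarith
  · rintro ⟨h1, h2⟩
    have hx0 : 0 ≤ x := le_trans (by positivity) h1
    have hx1 : x < 1 := by
      have hle : ((r:ℝ) + 1) / (basePow b n : ℝ) ≤ 1 := by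
        rw [div_le_one hB]
        have : (r : ℝ) + 1 ≤ (basePow b n : ℝ) := by exact_mod_cast hr1
        linarith
      linarith
    refine ⟨⟨hx0, hx1⟩, ?_⟩
    show ⌊x * (basePow b n : ℝ)⌋ = r
    rw [Int.floor_eq_iff]
    constructor
    · rw [div_le_iff₀ hB] at h1; linarith
    · rw [lt_div_iff₀ hB] at h2; push_cast; linarith


/-- finite-coordinate point cylinder -/
def Cyl (n : ℕ) (a : ℕ → ℤ) : Set (ℕ → ℤ) := {g | ∀ i < n, g i = a i}

lemma measurableSet_Cyl (n : ℕ) (a : ℕ → ℤ) : MeasurableSet (Cyl n a) := by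
  have : Cyl n a = ⋂ i ∈ Finset.range n, {g : ℕ → ℤ | g i = a i} := by
    ext g; simp [Cyl]
  rw [this]
  refine MeasurableSet.biInter (Finset.range n).countable_toSet (fun i _ => ?_)
  have h2 : {g : ℕ → ℤ | g i = a i} = (fun g : ℕ → ℤ => g i) ⁻¹' {a i} := rfl
  rw [h2]
  exact measurable_pi_apply i (measurableSet_singleton (a i))

lemma volume_Ico_inv (c : ℝ) (N : ℕ) (hN : 0 < N) :
    volume (Set.Ico (c / (N:ℝ)) ((c + 1) / (N:ℝ))) = ((N : ℝ≥0∞))⁻¹ := by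
  have hNR : (0:ℝ) < (N:ℝ) := by exact_mod_cast hN
  rw [Real.volume_Ico]
  have h2 : (c + 1) / (N:ℝ) - c / (N:ℝ) = ((N:ℝ))⁻¹ := by field_simp; ring
  rw [h2, ENNReal.ofReal_inv_of_pos hNR, ENNReal.ofReal_natCast]

lemma measurableSet_coordEq (n : ℕ) (v : ℤ) : MeasurableSet {g : ℕ → ℤ | g n = v} := by
  have h2 : {g : ℕ → ℤ | g n = v} = (fun g : ℕ → ℤ => g n) ⁻¹' {v} := rfl
  rw [h2]
  exact measurable_pi_apply n (measurableSet_singleton v)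

lemma muB_apply {S : Set (ℕ → ℤ)} (hS : MeasurableSet S) :
    muB b S = volume (digitMap b ⁻¹' S ∩ Set.Ico (0:ℝ) 1) := by
  rw [muB, Measure.map_apply (measurable_digitMap b) hS,
    Measure.restrict_apply ((measurable_digitMap b) hS)]

lemma muB_Cyl_in {a : ℕ → ℤ} {n : ℕ} (h : ∀ i < n, 0 ≤ a i ∧ a i ≤ b i) :
    muB b (Cyl n a) = ((basePow b n : ℝ≥0∞))⁻¹ := by
  rw [muB_apply (measurableSet_Cyl n a)]
  have hseteq : digitMap b ⁻¹' (Cyl n a) ∩ Set.Ico (0:ℝ) 1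
      = {x ∈ Set.Ico (0:ℝ) 1 | Dfl b n x = code b a n} := by
    ext x
    simp only [Set.mem_inter_iff, Set.mem_preimage, Cyl, Set.mem_setOf_eq]
    constructor
    · rintro ⟨hd, hx⟩; exact ⟨hx, (digits_iff_code hx h).mp hd⟩
    · rintro ⟨hx, hD⟩; exact ⟨(digits_iff_code hx h).mpr hD, hx⟩
  obtain ⟨hc0, hc1⟩ := code_range (b := b) h
  rw [hseteq, Dfl_set hc0 hc1, volume_Ico_inv _ _ (basePow_pos b n)]

lemma muB_Cyl_out {a : ℕ → ℤ} {n : ℕ} (h : ¬ ∀ i < n, 0 ≤ a i ∧ a i ≤ b i) :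
    muB b (Cyl n a) = 0 := by
  rw [muB_apply (measurableSet_Cyl n a)]
  have hempty : digitMap b ⁻¹' (Cyl n a) ∩ Set.Ico (0:ℝ) 1 = ∅ := by
    ext x
    simp only [Set.mem_inter_iff, Set.mem_preimage, Cyl, Set.mem_setOf_eq,
      Set.mem_empty_iff_false, iff_false, not_and]
    intro hd hx
    exact h (fun i hi => by rw [← hd i hi]; exact digit_range hx.1 i)
  rw [hempty]
  simp

/-- The box `∏ [0, b n]`. -/
def Box (b : ℕ → ℕ) : Set (ℕ → ℤ) := {g | ∀ n, 0 ≤ g n ∧ g n ≤ b n}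

lemma measurableSet_Box (b : ℕ → ℕ) : MeasurableSet (Box b) := by
  have : Box b = ⋂ n, {g : ℕ → ℤ | 0 ≤ g n ∧ g n ≤ b n} := by ext g; simp [Box]
  rw [this]
  refine MeasurableSet.iInter fun n => ?_
  have : {g : ℕ → ℤ | 0 ≤ g n ∧ g n ≤ b n} = (fun g : ℕ → ℤ => g n) ⁻¹' (Set.Icc 0 (b n)) := by
    ext g; simp [Set.mem_Icc]
  rw [this]
  exact measurable_pi_apply n measurableSet_Icc

lemma isClosed_Box (b : ℕ → ℕ) : IsClosed (Box b) := by
  have : Box b = ⋂ n, (fun g : ℕ → ℤ => g n) ⁻¹' (Set.Icc 0 (b n)) := by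
    ext g; simp [Box, Set.mem_Icc]
  rw [this]
  exact isClosed_iInter fun n => IsClosed.preimage (continuous_apply n) isClosed_Icc

lemma isCompact_Box (b : ℕ → ℕ) : IsCompact (Box b) := by
  have hsub : Box b ⊆ Set.pi Set.univ (fun n => Set.Icc (0:ℤ) (b n)) := by
    intro g hg; intro n _; exact ⟨(hg n).1, (hg n).2⟩
  exact IsCompact.of_isClosed_subset (isCompact_univ_pi fun n => Set.finite_Icc _ _ |>.isCompact)
    (isClosed_Box b) hsub

lemma muB_Box (b : ℕ → ℕ) : muB b (Box b) = 1 := by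
  rw [muB_apply (measurableSet_Box b)]
  have : digitMap b ⁻¹' (Box b) ∩ Set.Ico (0:ℝ) 1 = Set.Ico (0:ℝ) 1 := by
    apply Set.inter_eq_self_of_subset_right
    intro x hx
    exact fun n => digit_range hx.1 n
  rw [this, Real.volume_Ico]; norm_num

lemma muB_Box_compl (b : ℕ → ℕ) : muB b (Box b)ᶜ = 0 := by
  have h := measure_compl (μ := muB b) (measurableSet_Box b) (measure_ne_top _ _)
  rw [muB_Box, measure_univ] at h
  simp at h
  exact h

lemma muB_coord_out {v : ℤ} (n : ℕ) (hv : ¬ (0 ≤ v ∧ v ≤ b n)) :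
    muB b {g | g n = v} = 0 := by
  rw [muB_apply (measurableSet_coordEq n v)]
  have hempty : digitMap b ⁻¹' {g | g n = v} ∩ Set.Ico (0:ℝ) 1 = ∅ := by
    ext x
    simp only [Set.mem_inter_iff, Set.mem_preimage, Set.mem_setOf_eq,
      Set.mem_empty_iff_false, iff_false, not_and]
    intro hd hx
    have := digit_range (b := b) hx.1 n
    rw [hd] at this
    omega
  rw [hempty]
  simp

lemma muB_coord_le {v : ℤ} (n : ℕ) : muB b {g | g n = v} ≤ ((b n + 1 : ℕ) : ℝ≥0∞)⁻¹ := by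
  by_cases hv : 0 ≤ v ∧ v ≤ b n
  swap
  · rw [muB_coord_out n hv]; exact zero_le
  rw [muB_apply (measurableSet_coordEq n v)]
  have hseteq : digitMap b ⁻¹' {g | g n = v} ∩ Set.Ico (0:ℝ) 1
      = ⋃ r ∈ Finset.range (basePow b n),
          {x ∈ Set.Ico (0:ℝ) 1 | Dfl b (n+1) x = (b n + 1) * (r:ℤ) + v} := by
    ext x
    simp only [Set.mem_inter_iff, Set.mem_preimage, Set.mem_setOf_eq, Set.mem_iUnion,
      Finset.mem_range, exists_prop]
    constructor
    · rintro ⟨hd, hx⟩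
      have h0 : (0:ℝ) ≤ x * (basePow b n : ℝ) := by
        have h3 : (0:ℝ) ≤ (basePow b n : ℝ) := by positivity
        exact mul_nonneg hx.1 h3
      have h1 : x * (basePow b n : ℝ) < (basePow b n : ℝ) := by
        have hB : (0:ℝ) < (basePow b n : ℝ) := by exact_mod_cast basePow_pos b n
        nlinarith [hx.2]
      have hD0 : 0 ≤ Dfl b n x := Int.floor_nonneg.mpr h0
      have hD1 : Dfl b n x < basePow b n :=
        Int.floor_lt.mpr (by exact_mod_cast h1)
      refine ⟨(Dfl b n x).toNat, by omega, hx, ?_⟩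
      have htn : ((Dfl b n x).toNat : ℤ) = Dfl b n x := Int.toNat_of_nonneg hD0
      rw [Dfl_succ x n, hd, htn]
    · rintro ⟨r, hr, hx, hD⟩
      refine ⟨?_, hx⟩
      have hrec := Dfl_succ (b := b) x n
      have hdr := digit_range (b := b) hx.1 n
      have heq : ((b n : ℤ) + 1) * Dfl b n x + digitMap b x n
          = ((b n : ℤ) + 1) * (r:ℤ) + v := by
        rw [← hrec, hD]
      exact (euclid heq hdr.1 hdr.2 hv.1 hv.2).2
  rw [hseteq]
  have hpieces : ∀ r ∈ Finset.range (basePow b n),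
      {x ∈ Set.Ico (0:ℝ) 1 | Dfl b (n+1) x = (b n + 1) * (r:ℤ) + v}
        = Set.Ico ((((b n + 1) * (r:ℤ) + v : ℤ) : ℝ) / (basePow b (n+1) : ℝ))
            (((((b n + 1) * (r:ℤ) + v : ℤ) : ℝ) + 1) / (basePow b (n+1) : ℝ)) := by
    intro r hr
    simp only [Finset.mem_range] at hr
    have h0 : (0:ℤ) ≤ (b n + 1) * (r:ℤ) + v := add_nonneg (by positivity) hv.1
    have hrz : ((r:ℤ)) < (basePow b n : ℤ) := by exact_mod_cast hr
    have hBrw : (basePow b (n+1) : ℤ) = (basePow b n : ℤ) * (b n + 1) := by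
      rw [basePow_succ]; push_cast; ring
    have h1 : (b n + 1) * (r:ℤ) + v < basePow b (n+1) := by
      rw [hBrw]
      nlinarith [hv.2, hrz]
    exact Dfl_set h0 h1
  rw [Set.iUnion₂_congr hpieces]
  rw [measure_biUnion_finset ?hd ?hm]
  case hm =>
    intro r _; exact measurableSet_Ico
  case hd =>
    intro r hr r' hr' hne
    apply Set.disjoint_left.mpr
    intro x hx1 hx2
    simp only [Set.mem_Ico] at hx1 hx2
    have hBpos' : (0:ℝ) < (basePow b (n+1) : ℝ) := by exact_mod_cast basePow_pos b (n+1)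
    have hrr' : (r:ℤ) ≠ (r':ℤ) := fun h => hne (by exact_mod_cast h)
    rcases lt_or_gt_of_ne hrr' with h | h
    · have hkey : ((((b n + 1) * (r:ℤ) + v : ℤ):ℝ)) + 1 ≤ (((b n + 1) * (r':ℤ) + v : ℤ):ℝ) := by
        push_cast
        have h9 : (r:ℤ) + 1 ≤ (r':ℤ) := h
        have h9' : ((r:ℝ)) + 1 ≤ ((r':ℝ)) := by exact_mod_cast h9
        nlinarith [h9']
      have l1 := hx1.2; have l2 := hx2.1
      rw [div_le_iff₀ hBpos'] at l2
      rw [lt_div_iff₀ hBpos'] at l1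
      nlinarith
    · have hkey : ((((b n + 1) * (r':ℤ) + v : ℤ):ℝ)) + 1 ≤ (((b n + 1) * (r:ℤ) + v : ℤ):ℝ) := by
        push_cast
        have h9 : (r':ℤ) + 1 ≤ (r:ℤ) := h
        have h9' : ((r':ℝ)) + 1 ≤ ((r:ℝ)) := by exact_mod_cast h9
        nlinarith [h9']
      have l1 := hx2.2; have l2 := hx1.1
      rw [div_le_iff₀ hBpos'] at l2
      rw [lt_div_iff₀ hBpos'] at l1
      nlinarith
  have hvol : ∀ r ∈ Finset.range (basePow b n),
      volume (Set.Ico ((((b n + 1) * (r:ℤ) + v : ℤ) : ℝ) / (basePow b (n+1) : ℝ))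
        (((((b n + 1) * (r:ℤ) + v : ℤ) : ℝ) + 1) / (basePow b (n+1) : ℝ)))
        = ((basePow b (n+1) : ℕ) : ℝ≥0∞)⁻¹ := by
    intro r _
    exact volume_Ico_inv _ _ (basePow_pos b (n+1))
  rw [Finset.sum_congr rfl hvol, Finset.sum_const, Finset.card_range, nsmul_eq_mul]
  have hB1 : ((basePow b (n+1) : ℕ) : ℝ≥0∞) = ((basePow b n : ℕ) : ℝ≥0∞)
      * ((b n + 1 : ℕ) : ℝ≥0∞) := by
    rw [basePow_succ]; push_cast; ring
  rw [hB1, ENNReal.mul_inv (Or.inl (by exact_mod_cast (basePow_pos b n).ne'))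
    (Or.inl (ENNReal.natCast_ne_top _)), ← mul_assoc,
    ENNReal.mul_inv_cancel (by exact_mod_cast (basePow_pos b n).ne')
      (ENNReal.natCast_ne_top _), one_mul]

lemma muB_coord_finset (n : ℕ) (T : Finset ℤ) :
    muB b {g | g n ∈ T} ≤ (T.card : ℝ≥0∞) * ((b n + 1 : ℕ) : ℝ≥0∞)⁻¹ := by
  have hsub : {g : ℕ → ℤ | g n ∈ T} = ⋃ v ∈ T, {g : ℕ → ℤ | g n = v} := by
    ext g; simp
  rw [hsub]
  calc muB b (⋃ v ∈ T, {g : ℕ → ℤ | g n = v}) ≤ ∑ v ∈ T, muB b {g | g n = v} :=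
        measure_biUnion_finset_le T _
    _ ≤ ∑ _v ∈ T, ((b n + 1 : ℕ) : ℝ≥0∞)⁻¹ := Finset.sum_le_sum (fun v _ => muB_coord_le n)
    _ = (T.card : ℝ≥0∞) * ((b n + 1 : ℕ) : ℝ≥0∞)⁻¹ := by
        rw [Finset.sum_const, nsmul_eq_mul]

def CylFam : Set (Set (ℕ → ℤ)) := {C | ∃ n a, C = Cyl n a}

lemma isPiSystem_CylFam : IsPiSystem CylFam := by
  rintro s ⟨n, a, rfl⟩ t ⟨n', a', rfl⟩ hne
  obtain ⟨g, hg1, hg2⟩ := hne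
  rcases le_total n n' with hle | hle
  · refine ⟨n', a', ?_⟩
    apply Set.eq_of_subset_of_subset Set.inter_subset_right
    intro g' hg'
    refine ⟨fun i hi => ?_, hg'⟩
    rw [hg' i (lt_of_lt_of_le hi hle), ← hg2 i (lt_of_lt_of_le hi hle), hg1 i hi]
  · refine ⟨n, a, ?_⟩
    apply Set.eq_of_subset_of_subset Set.inter_subset_left
    intro g' hg'
    refine ⟨hg', fun i hi => ?_⟩
    rw [hg' i (lt_of_lt_of_le hi hle), ← hg1 i (lt_of_lt_of_le hi hle), hg2 i hi]

lemma countable_trunc (n : ℕ) (P : (ℕ → ℤ) → Prop) :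
    Set.Countable {w : ℕ → ℤ | P w ∧ ∀ i, n ≤ i → w i = 0} := by
  have hsub : {w : ℕ → ℤ | P w ∧ ∀ i, n ≤ i → w i = 0}
      ⊆ Set.range (fun (u : Fin n → ℤ) => fun i => if h : i < n then u ⟨i, h⟩ else 0) := by
    intro w hw
    refine ⟨fun j => w j, funext fun i => ?_⟩
    by_cases h : i < n
    · simp [h]
    · simp only [h, dif_neg, not_false_iff]
      exact (hw.2 i (le_of_not_gt h)).symm
  exact Set.Countable.mono hsub (Set.countable_range _)

lemma coordEq_eq_iUnion (k : ℕ) (v : ℤ) :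
    {g : ℕ → ℤ | g k = v}
      = ⋃ w ∈ {w : ℕ → ℤ | w k = v ∧ ∀ i, k+1 ≤ i → w i = 0}, Cyl (k+1) w := by
  ext g
  simp only [Set.mem_setOf_eq, Set.mem_iUnion, exists_prop]
  constructor
  · intro hg
    refine ⟨fun i => if i ≤ k then g i else 0, ⟨by simp [hg], fun i hi => by
      simp [Nat.not_le.mpr (Nat.lt_of_succ_le hi)]⟩, fun i hi => ?_⟩
    simp [Nat.lt_succ_iff.mp hi]
  · rintro ⟨w, ⟨hwk, _⟩, hgw⟩
    rw [hgw k (Nat.lt_succ_self k), hwk]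

lemma generateFrom_CylFam :
    (by infer_instance : MeasurableSpace (ℕ → ℤ)) = .generateFrom CylFam := by
  refine le_antisymm ?_ (MeasurableSpace.generateFrom_le ?_)
  · have hcyl : ∀ k v, MeasurableSet[MeasurableSpace.generateFrom CylFam]
        {g : ℕ → ℤ | g k = v} := by
      intro k v
      rw [coordEq_eq_iUnion k v]
      exact MeasurableSet.biUnion (countable_trunc (k+1) _)
        (fun w _ => MeasurableSpace.measurableSet_generateFrom ⟨k+1, w, rfl⟩)
    refine iSup_le fun k => MeasurableSpace.comap_le_iff_le_map.mpr fun s _ => ?_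
    show MeasurableSet[MeasurableSpace.generateFrom CylFam] ((fun g : ℕ → ℤ => g k) ⁻¹' s)
    have hpre : (fun g : ℕ → ℤ => g k) ⁻¹' s = ⋃ v ∈ s, {g : ℕ → ℤ | g k = v} := by
      ext g; simp
    rw [hpre]
    exact MeasurableSet.biUnion s.to_countable (fun v _ => hcyl k v)
  · rintro s ⟨n, a, rfl⟩
    exact measurableSet_Cyl n a

lemma ext_of_Cyl {μ ν : Measure (ℕ → ℤ)} [IsProbabilityMeasure μ] [IsProbabilityMeasure ν]
    (h : ∀ n a, μ (Cyl n a) = ν (Cyl n a)) : μ = ν := by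
  refine ext_of_generate_finite CylFam generateFrom_CylFam isPiSystem_CylFam ?_ ?_
  · rintro s ⟨n, a, rfl⟩
    exact h n a
  · simp [measure_univ]

lemma meas_inter_conull {α : Type*} [MeasurableSpace α] {μ : Measure α} {s t : Set α}
    (ht : μ tᶜ = 0) : μ (s ∩ t) = μ s := by
  refine le_antisymm (measure_mono Set.inter_subset_left) ?_
  calc μ s ≤ μ ((s ∩ t) ∪ tᶜ) := measure_mono (by
        intro x hx
        by_cases hxt : x ∈ t
        · exact Or.inl ⟨hx, hxt⟩
        · exact Or.inr hxt)
    _ ≤ μ (s ∩ t) + μ tᶜ := measure_union_le _ _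
    _ = μ (s ∩ t) := by rw [ht, add_zero]

/-- recombination map -/
def addMul (q : ℕ → ℕ) (p : (ℕ → ℤ) × (ℕ → ℤ)) : ℕ → ℤ := fun n => p.1 n * (q n + 1) + p.2 n

lemma measurable_addMul (q : ℕ → ℕ) : Measurable (addMul q) := by
  apply measurable_pi_lambda
  intro n
  exact ((measurable_pi_apply n).comp measurable_fst).mul_const _ |>.add
    ((measurable_pi_apply n).comp measurable_snd)

lemma basePow_mul (q m b M : ℕ → ℕ) (hb1 : ∀ i, b i + 1 = m i * (q i + 1))
    (hM1 : ∀ i, M i + 1 = m i) (n : ℕ) :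
    basePow b n = basePow M n * basePow q n := by
  unfold basePow
  rw [← Finset.prod_mul_distrib]
  apply Finset.prod_congr rfl
  intro i _
  rw [hb1 i, ← hM1 i]

lemma muB_decomp (q m b M : ℕ → ℕ) (hb1 : ∀ i, b i + 1 = m i * (q i + 1))
    (hM1 : ∀ i, M i + 1 = m i) :
    muB b = Measure.map (addMul q) ((muB M).prod (muB q)) := by
  haveI : IsProbabilityMeasure (Measure.map (addMul q) ((muB M).prod (muB q))) :=
    Measure.isProbabilityMeasure_map (measurable_addMul q).aemeasurable
  symm
  apply ext_of_Cyl
  intro n a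
  rw [Measure.map_apply (measurable_addMul q) (measurableSet_Cyl n a)]
  have hnull : ((muB M).prod (muB q)) ((Box M ×ˢ Box q)ᶜ) = 0 := by
    have hcup : (Box M ×ˢ Box q)ᶜ ⊆ ((Box M)ᶜ ×ˢ univ) ∪ (univ ×ˢ (Box q)ᶜ) := by
      intro p hp
      simp only [Set.mem_compl_iff, Set.mem_prod, not_and] at hp
      by_cases h1 : p.1 ∈ Box M
      · exact Or.inr ⟨trivial, hp h1⟩
      · exact Or.inl ⟨h1, trivial⟩
    refine measure_mono_null hcup (le_antisymm ?_ (zero_le))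
    calc ((muB M).prod (muB q)) (((Box M)ᶜ ×ˢ univ) ∪ (univ ×ˢ (Box q)ᶜ))
        ≤ ((muB M).prod (muB q)) ((Box M)ᶜ ×ˢ univ)
          + ((muB M).prod (muB q)) (univ ×ˢ (Box q)ᶜ) := measure_union_le _ _
      _ = 0 := by
          rw [Measure.prod_prod, Measure.prod_prod, muB_Box_compl, muB_Box_compl]
          simp
  rw [← meas_inter_conull (s := addMul q ⁻¹' Cyl n a) hnull]
  have hsplit : ∀ (j d : ℤ) (i : ℕ), 0 ≤ d → d ≤ q i → ∀ aa : ℤ,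
      j * ((q i : ℤ) + 1) + d = aa → j = aa / ((q i : ℤ) + 1) ∧ d = aa % ((q i : ℤ) + 1) := by
    intro j d i hd0 hd1 aa heq
    have hqpos : (0:ℤ) < (q i : ℤ) + 1 := by positivity
    have hdm : ((q i : ℤ) + 1) * (aa / ((q i : ℤ) + 1)) + aa % ((q i : ℤ) + 1) = aa :=
      Int.mul_ediv_add_emod aa ((q i : ℤ) + 1)
    have hr0 : 0 ≤ aa % ((q i:ℤ)+1) := Int.emod_nonneg aa (ne_of_gt hqpos)
    have hr1 : aa % ((q i:ℤ)+1) ≤ q i := by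
      have := Int.emod_lt_of_pos aa hqpos
      omega
    have heq2 : ((q i:ℤ)+1) * j + d = ((q i:ℤ)+1) * (aa / ((q i:ℤ)+1)) + aa % ((q i:ℤ)+1) := by
      rw [hdm]
      linarith [heq, mul_comm j ((q i:ℤ)+1)]
    exact euclid heq2 hd0 hd1 hr0 hr1
  have hset : addMul q ⁻¹' Cyl n a ∩ (Box M ×ˢ Box q)
      = ((Cyl n (fun i => a i / ((q i : ℤ) + 1)) ∩ Box M)
          ×ˢ (Cyl n (fun i => a i % ((q i : ℤ) + 1)) ∩ Box q)) := by
    ext p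
    simp only [Set.mem_inter_iff, Set.mem_preimage, Set.mem_prod, Cyl, Box, Set.mem_setOf_eq,
      addMul]
    constructor
    · rintro ⟨hsum, hp1, hp2⟩
      refine ⟨⟨fun i hi => ?_, hp1⟩, fun i hi => ?_, hp2⟩
      · exact (hsplit (p.1 i) (p.2 i) i (hp2 i).1 (hp2 i).2 (a i) (hsum i hi)).1
      · exact (hsplit (p.1 i) (p.2 i) i (hp2 i).1 (hp2 i).2 (a i) (hsum i hi)).2
    · rintro ⟨⟨hc1, hb1'⟩, hc2, hb2⟩
      refine ⟨fun i hi => ?_, hb1', hb2⟩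
      rw [hc1 i hi, hc2 i hi]
      have hdm := Int.mul_ediv_add_emod (a i) ((q i : ℤ) + 1)
      linarith [mul_comm ((q i:ℤ)+1) (a i / ((q i:ℤ)+1))]
  rw [hset, Measure.prod_prod, meas_inter_conull (muB_Box_compl M),
    meas_inter_conull (muB_Box_compl q)]
  by_cases hin : ∀ i < n, 0 ≤ a i ∧ a i ≤ b i
  · have hdiv : ∀ i < n, 0 ≤ a i / ((q i : ℤ) + 1) ∧ a i / ((q i : ℤ) + 1) ≤ M i := by
      intro i hi
      have hqpos : (0:ℤ) < (q i : ℤ) + 1 := by positivity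
      obtain ⟨h0, h1⟩ := hin i hi
      constructor
      · exact Int.ediv_nonneg h0 hqpos.le
      · have hmb : ((b i : ℤ)) + 1 = (m i : ℤ) * ((q i : ℤ) + 1) := by
          have h := hb1 i
          zify at h
          linarith
        have hlt : a i / ((q i:ℤ)+1) < (m i : ℤ) := by
          by_contra hcon
          push_neg at hcon
          have := (Int.le_ediv_iff_mul_le hqpos).mp hcon
          linarith
        have hMi : ((M i : ℤ)) + 1 = (m i : ℤ) := by
          have h := hM1 i
          zify at h
          linarith
        linarith
    have hmod : ∀ i < n, 0 ≤ a i % ((q i : ℤ) + 1) ∧ a i % ((q i : ℤ) + 1) ≤ q i := by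
      intro i _
      have hqpos : (0:ℤ) < (q i : ℤ) + 1 := by positivity
      refine ⟨Int.emod_nonneg _ (ne_of_gt hqpos), ?_⟩
      have := Int.emod_lt_of_pos (a i) hqpos
      omega
    rw [muB_Cyl_in hdiv, muB_Cyl_in hmod, muB_Cyl_in hin]
    rw [basePow_mul q m b M hb1 hM1 n]
    have hMne : ((basePow M n : ℕ) : ℝ≥0∞) ≠ 0 := by
      have : 0 < basePow M n := Finset.prod_pos fun i _ => Nat.succ_pos _
      exact_mod_cast this.ne'
    push_cast
    rw [ENNReal.mul_inv (Or.inl hMne) (Or.inl (ENNReal.natCast_ne_top _))]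
  · rw [muB_Cyl_out hin]
    push_neg at hin
    obtain ⟨i, hi, hbad⟩ := hin
    have hqpos : (0:ℤ) < (q i : ℤ) + 1 := by positivity
    have hbadd : ¬ ∀ k < n, 0 ≤ a k / ((q k : ℤ) + 1) ∧ a k / ((q k : ℤ) + 1) ≤ M k := by
      intro hall
      obtain ⟨hd0, hd1⟩ := hall i hi
      by_cases h0 : 0 ≤ a i
      · have h1 : (b i : ℤ) < a i := hbad h0
        have hmb : ((b i : ℤ)) + 1 = (m i : ℤ) * ((q i : ℤ) + 1) := by
          have h := hb1 i
          zify at h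
          linarith
        have hge : (m i : ℤ) ≤ a i / ((q i:ℤ)+1) :=
          (Int.le_ediv_iff_mul_le hqpos).mpr (by linarith)
        have hMi : ((M i : ℤ)) + 1 = (m i : ℤ) := by
          have h := hM1 i
          zify at h
          linarith
        linarith
      · push_neg at h0
        have : a i / ((q i:ℤ)+1) < 0 := Int.ediv_neg_of_neg_of_pos h0 hqpos
        linarith
    rw [muB_Cyl_out hbadd, zero_mul]


/-- projection of the part of `F` over `Z` with second coordinates bounded by `h` below `n`. -/
def Xn (F : Set P2) (Z : Set (ℕ → ℤ)) (n : ℕ) (h : ℕ → ℕ) : Set (ℕ → ℤ) :=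
  Prod.fst '' (F ∩ Z ×ˢ {y | ∀ i < n, y i ≤ h i})

lemma Xn_congr (F : Set P2) (Z : Set (ℕ → ℤ)) (n : ℕ) {h1 h2 : ℕ → ℕ}
    (h : ∀ i < n, h1 i = h2 i) : Xn F Z n h1 = Xn F Z n h2 := by
  have hset : {y : ℕ → ℕ | ∀ i < n, y i ≤ h1 i} = {y : ℕ → ℕ | ∀ i < n, y i ≤ h2 i} := by
    ext y
    constructor <;> intro hy i hi
    · rw [← h i hi]; exact hy i hi
    · rw [h i hi]; exact hy i hi
  unfold Xn
  rw [hset]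

lemma Xn_zero (F : Set P2) (Z : Set (ℕ → ℤ)) (h : ℕ → ℕ) :
    Xn F Z 0 h = Prod.fst '' (F ∩ Z ×ˢ univ) := by
  have hset : {y : ℕ → ℕ | ∀ i < 0, y i ≤ h i} = (univ : Set (ℕ → ℕ)) := by
    ext y; simp
  unfold Xn
  rw [hset]

lemma Xn_antitone (F : Set P2) (Z : Set (ℕ → ℤ)) {n n' : ℕ} (hn : n ≤ n') (h : ℕ → ℕ) :
    Xn F Z n' h ⊆ Xn F Z n h := by
  apply Set.image_mono
  apply Set.inter_subset_inter_right
  apply Set.prod_mono_right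
  intro y hy i hi
  exact hy i (lt_of_lt_of_le hi hn)

lemma Xn_union (F : Set P2) (Z : Set (ℕ → ℤ)) (n : ℕ) (h : ℕ → ℕ) :
    Xn F Z n h = ⋃ k, Xn F Z (n+1) (Function.update h n k) := by
  apply Set.eq_of_subset_of_subset
  · rintro x ⟨p, ⟨hpF, hpZ, hpy⟩, rfl⟩
    refine Set.mem_iUnion.mpr ⟨p.2 n, p, ⟨hpF, hpZ, fun i hi => ?_⟩, rfl⟩
    rcases Nat.lt_succ_iff_lt_or_eq.mp hi with hi' | rfl
    · rw [Function.update_of_ne (Nat.ne_of_lt hi') _ _]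
      exact hpy i hi'
    · rw [Function.update_self]
  · refine Set.iUnion_subset fun k => ?_
    rintro x ⟨p, ⟨hpF, hpZ, hpy⟩, rfl⟩
    refine ⟨p, ⟨hpF, hpZ, fun i hi => ?_⟩, rfl⟩
    have := hpy i (Nat.lt_succ_of_lt hi)
    rwa [Function.update_of_ne (Nat.ne_of_lt hi) _ _] at this

lemma Xn_mono_k (F : Set P2) (Z : Set (ℕ → ℤ)) (n : ℕ) (h : ℕ → ℕ) :
    Monotone (fun k => Xn F Z (n+1) (Function.update h n k)) := by
  intro k k' hkk
  apply Set.image_mono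
  apply Set.inter_subset_inter_right
  apply Set.prod_mono_right
  intro y hy i hi
  have h1 := hy i hi
  rw [Function.update_apply] at h1 ⊢
  split_ifs at h1 ⊢ with hc
  · exact le_trans h1 hkk
  · exact h1

lemma isCompact_natBox (H : ℕ → ℕ) : IsCompact {y : ℕ → ℕ | ∀ i, y i ≤ H i} := by
  have hcl : IsClosed {y : ℕ → ℕ | ∀ i, y i ≤ H i} := by
    have : {y : ℕ → ℕ | ∀ i, y i ≤ H i} = ⋂ i, (fun y : ℕ → ℕ => y i) ⁻¹' (Set.Iic (H i)) := by
      ext y; simp [Set.mem_Iic]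
    rw [this]
    exact isClosed_iInter fun i => IsClosed.preimage (continuous_apply i) (isClosed_discrete _)
  have hsub : {y : ℕ → ℕ | ∀ i, y i ≤ H i} ⊆ Set.pi Set.univ (fun i => Set.Iic (H i)) := by
    intro y hy i _
    exact hy i
  exact IsCompact.of_isClosed_subset
    (isCompact_univ_pi fun i => (Set.finite_Iic (H i)).isCompact) hcl hsub

/-- The diagonal compactness lemma: the intersection of the closures of the `Xn` is contained
in the projection of the compact piece. -/
lemma diag_subset {F : Set P2} (hF : IsClosed F) {Z : Set (ℕ → ℤ)} (hZ : IsCompact Z)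
    (h : ℕ → ℕ) :
    (⋂ n, closure (Xn F Z n h)) ⊆ Prod.fst '' (F ∩ Z ×ˢ {y | ∀ i, y i ≤ h i}) := by
  intro x hx
  have hsel : ∀ n : ℕ, ∃ p : P2, p ∈ F ∧ p.1 ∈ Z ∧ (∀ i < n, p.2 i ≤ h i)
      ∧ (∀ i < n, p.1 i = x i) := by
    intro n
    have hx' : x ∈ closure (Xn F Z n h) := Set.mem_iInter.mp hx n
    have hVeq : {w : ℕ → ℤ | ∀ i < n, w i = x i}
        = ⋂ i ∈ Finset.range n, (fun w : ℕ → ℤ => w i) ⁻¹' {x i} := by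
      ext w; simp
    have hV : IsOpen {w : ℕ → ℤ | ∀ i < n, w i = x i} := by
      rw [hVeq]
      exact isOpen_biInter_finset fun i _ =>
        (continuous_apply i).isOpen_preimage _ (isOpen_discrete _)
    obtain ⟨z, hzV, hzX⟩ := mem_closure_iff.mp hx' _ hV (fun i _ => rfl)
    obtain ⟨p, ⟨hpF, hpZ, hpy⟩, hpx⟩ := hzX
    exact ⟨p, hpF, hpZ, hpy, fun i hi => by rw [hpx]; exact hzV i hi⟩
  choose pp hp1 hp2 hp3 hp4 using hsel
  set H : ℕ → ℕ := fun i => max (h i) (Finset.sup (Finset.range (i+1)) (fun n => (pp n).2 i))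
    with hHdef
  set B' : Set (ℕ → ℕ) := {y | ∀ i, y i ≤ H i} with hB'def
  have hmem : ∀ n, pp n ∈ Z ×ˢ B' := by
    intro n
    refine ⟨hp2 n, fun i => ?_⟩
    rcases lt_or_ge i n with hi | hi
    · exact le_trans (hp3 n i hi) (le_max_left _ _)
    · refine le_trans ?_ (le_max_right _ _)
      exact Finset.le_sup (f := fun n => (pp n).2 i) (Finset.mem_range.mpr (Nat.lt_succ_of_le hi))
  obtain ⟨q, hq, φ, hφmono, hφtend⟩ := (hZ.prod (isCompact_natBox H)).tendsto_subseq hmem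
  have hqF : q ∈ F := hF.mem_of_tendsto hφtend (Eventually.of_forall fun k => hp1 _)
  have hcoord1 : ∀ i, q.1 i = x i := by
    intro i
    have ht1 : Tendsto (fun k => (pp (φ k)).1 i) atTop (𝓝 (q.1 i)) :=
      (((continuous_apply i).comp continuous_fst).continuousAt).tendsto.comp hφtend
    have hev : ∀ᶠ k in atTop, (pp (φ k)).1 i = x i := by
      filter_upwards [eventually_ge_atTop (i+1)] with k hk
      exact hp4 (φ k) i (lt_of_lt_of_le (Nat.lt_succ_of_le (le_refl i))
        (le_trans hk (hφmono.le_apply)))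
    have ht2 : Tendsto (fun k => (pp (φ k)).1 i) atTop (𝓝 (x i)) :=
      Tendsto.congr' (hev.mono fun k hk => hk.symm) tendsto_const_nhds
    exact tendsto_nhds_unique ht1 ht2
  have hcoord2 : ∀ i, q.2 i ≤ h i := by
    intro i
    have ht1 : Tendsto (fun k => (pp (φ k)).2 i) atTop (𝓝 (q.2 i)) :=
      (((continuous_apply i).comp continuous_snd).continuousAt).tendsto.comp hφtend
    rw [nhds_discrete, tendsto_pure] at ht1
    have hev : ∀ᶠ k in atTop, (pp (φ k)).2 i ≤ h i := by
      filter_upwards [eventually_ge_atTop (i+1)] with k hk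
      exact hp3 (φ k) i (lt_of_lt_of_le (Nat.lt_succ_of_le (le_refl i))
        (le_trans hk (hφmono.le_apply)))
    obtain ⟨k, hk1, hk2⟩ := (ht1.and hev).exists
    rw [← hk1]
    exact hk2
  exact ⟨q, ⟨hqF, hq.1, hcoord2⟩, funext hcoord1⟩


lemma exists_le_add_of_eq_iSup {f : ℕ → ℝ≥0∞} {a : ℝ≥0∞} (ha : a = ⨆ k, f k) (hfin : a ≠ ⊤)
    {e : ℝ≥0∞} (he : 0 < e) : ∃ k, a ≤ f k + e := by
  rcases eq_or_ne a 0 with rfl | ha0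
  · exact ⟨0, zero_le⟩
  · have hlt : a - e < ⨆ k, f k := by
      rw [← ha]
      exact ENNReal.sub_lt_self hfin ha0 he.ne'
    obtain ⟨k, hk⟩ := lt_iSup_iff.mp hlt
    exact ⟨k, tsub_le_iff_right.mp hk.le⟩

lemma geom_tsum : ∑' i : ℕ, ((2:ℝ≥0∞))⁻¹^(i+1) = 1 := by
  have h1 : ∀ i : ℕ, ((2:ℝ≥0∞))⁻¹^(i+1) = 2⁻¹ * (2⁻¹)^i := fun i => by
    rw [pow_succ, mul_comm]
  rw [tsum_congr h1, ENNReal.tsum_mul_left, ENNReal.tsum_geometric, ENNReal.one_sub_inv_two,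
    inv_inv]
  exact ENNReal.inv_mul_cancel two_ne_zero ENNReal.ofNat_ne_top

lemma epshalf_tsum_le (ε : ℝ≥0∞) : ∑' i : ℕ, ε / 2^(i+1) ≤ ε := by
  have h1 : ∀ i : ℕ, ε / 2^(i+1) = ε * ((2:ℝ≥0∞))⁻¹^(i+1) := fun i => by
    rw [div_eq_mul_inv, ENNReal.inv_pow]
  rw [tsum_congr h1, ENNReal.tsum_mul_left, geom_tsum, mul_one]

lemma epshalf_sum_le (ε : ℝ≥0∞) (n : ℕ) : ∑ i ∈ Finset.range n, ε / 2^(i+1) ≤ ε :=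
  le_trans (ENNReal.sum_le_tsum _) (epshalf_tsum_le ε)

/-- Core capacitability lemma. -/
lemma core {F : Set P2} (hF : IsClosed F) {Z : Set (ℕ → ℤ)} (hZ : IsCompact Z)
    (μ : Measure (ℕ → ℤ)) [IsFiniteMeasure μ] {ε : ℝ≥0∞} (hε : 0 < ε) :
    ∃ h : ℕ → ℕ,
      IsCompact (F ∩ Z ×ˢ {y | ∀ i, y i ≤ h i}) ∧
      μ (Prod.fst '' (F ∩ Z ×ˢ univ))
        ≤ μ (Prod.fst '' (F ∩ Z ×ˢ {y | ∀ i, y i ≤ h i})) + ε := by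
  have step : ∀ (n : ℕ) (hh : ℕ → ℕ), ∃ k,
      μ (Xn F Z n hh) ≤ μ (Xn F Z (n+1) (Function.update hh n k)) + ε / 2^(n+1) := by
    intro n hh
    have hsup : μ (Xn F Z n hh) = ⨆ k, μ (Xn F Z (n+1) (Function.update hh n k)) := by
      rw [Xn_union F Z n hh]
      exact (Xn_mono_k F Z n hh).measure_iUnion
    exact exists_le_add_of_eq_iSup hsup (measure_ne_top μ _)
      (ENNReal.div_pos hε.ne' (by
        simp only [ne_eq]
        exact ENNReal.pow_ne_top ENNReal.ofNat_ne_top))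
  choose stepf hstep using step
  set hs : ℕ → (ℕ → ℕ) := fun n =>
    Nat.rec (motive := fun _ => ℕ → ℕ) (fun _ => 0)
      (fun m ih => Function.update ih m (stepf m ih)) n with hhs
  have hss : ∀ n, hs (n+1) = Function.update (hs n) n (stepf n (hs n)) := fun n => rfl
  set h : ℕ → ℕ := fun i => hs (i+1) i with hhdef
  have hagree : ∀ n i, i < n → hs n i = h i := by
    intro n
    induction n with
    | zero => intro i hi; omega
    | succ n ih =>
        intro i hi
        rcases Nat.lt_succ_iff_lt_or_eq.mp hi with hi' | rfl
        · rw [hss n, Function.update_apply, if_neg (Nat.ne_of_lt hi')]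
          exact ih i hi'
        · rfl
  have hinv : ∀ n, μ (Xn F Z 0 (hs 0))
      ≤ μ (Xn F Z n (hs n)) + ∑ i ∈ Finset.range n, ε / 2^(i+1) := by
    intro n
    induction n with
    | zero => simp
    | succ n ih =>
        calc μ (Xn F Z 0 (hs 0)) ≤ μ (Xn F Z n (hs n)) + ∑ i ∈ Finset.range n, ε / 2^(i+1) :=
              ih
          _ ≤ (μ (Xn F Z (n+1) (hs (n+1))) + ε / 2^(n+1))
              + ∑ i ∈ Finset.range n, ε / 2^(i+1) := by
                apply add_le_add_left
                rw [hss n]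
                exact hstep n (hs n)
          _ = μ (Xn F Z (n+1) (hs (n+1))) + ∑ i ∈ Finset.range (n+1), ε / 2^(i+1) := by
                rw [Finset.sum_range_succ]
                ring
  refine ⟨h, (hZ.prod (isCompact_natBox h)).inter_left hF, ?_⟩
  have hδ : ∀ n, μ (Prod.fst '' (F ∩ Z ×ˢ univ)) ≤ μ (closure (Xn F Z n h)) + ε := by
    intro n
    calc μ (Prod.fst '' (F ∩ Z ×ˢ univ)) = μ (Xn F Z 0 (hs 0)) := by rw [Xn_zero]
      _ ≤ μ (Xn F Z n (hs n)) + ∑ i ∈ Finset.range n, ε / 2^(i+1) := hinv n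
      _ ≤ μ (Xn F Z n h) + ε := by
          rw [Xn_congr F Z n (fun i hi => hagree n i hi)]
          exact add_le_add_right (epshalf_sum_le ε n) _
      _ ≤ μ (closure (Xn F Z n h)) + ε := add_le_add_left (measure_mono subset_closure) _
  have hiInter : μ (⋂ n, closure (Xn F Z n h)) = ⨅ n, μ (closure (Xn F Z n h)) := by
    apply Directed.measure_iInter
    · exact fun n => isClosed_closure.measurableSet.nullMeasurableSet
    · intro a b
      exact ⟨max a b, closure_mono (Xn_antitone F Z (le_max_left a b) h),
        closure_mono (Xn_antitone F Z (le_max_right a b) h)⟩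
    · exact ⟨0, measure_ne_top μ _⟩
  have hfinal : μ (Prod.fst '' (F ∩ Z ×ˢ univ)) ≤ μ (⋂ n, closure (Xn F Z n h)) + ε := by
    rw [hiInter]
    have h1 : μ (Prod.fst '' (F ∩ Z ×ˢ univ)) - ε ≤ ⨅ n, μ (closure (Xn F Z n h)) :=
      le_iInf fun n => tsub_le_iff_right.mpr (hδ n)
    calc μ (Prod.fst '' (F ∩ Z ×ˢ univ)) ≤ μ (Prod.fst '' (F ∩ Z ×ˢ univ)) - ε + ε :=
          le_tsub_add
      _ ≤ (⨅ n, μ (closure (Xn F Z n h))) + ε := add_le_add_left h1 _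
  exact le_trans hfinal (add_le_add_left (measure_mono (diag_subset hF hZ h)) _)

/-- Tightness: compact sets of almost full measure. -/
lemma tight (μ : Measure (ℕ → ℤ)) [IsProbabilityMeasure μ] {ε : ℝ≥0∞} (hε : 0 < ε) :
    ∃ Z : Set (ℕ → ℤ), IsCompact Z ∧ μ Zᶜ ≤ ε := by
  have step : ∀ n : ℕ, ∃ r : ℕ, 1 ≤ μ {x : ℕ → ℤ | (x n).natAbs ≤ r} + ε / 2^(n+1) := by
    intro n
    have hmono : Monotone (fun r : ℕ => {x : ℕ → ℤ | (x n).natAbs ≤ r}) := by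
      intro r r' hrr x hx
      exact le_trans hx hrr
    have hsup : (1:ℝ≥0∞) = ⨆ r : ℕ, μ {x : ℕ → ℤ | (x n).natAbs ≤ r} := by
      have huniv : (⋃ r : ℕ, {x : ℕ → ℤ | (x n).natAbs ≤ r}) = univ := by
        ext x
        simp only [Set.mem_iUnion, Set.mem_setOf_eq, Set.mem_univ, iff_true]
        exact ⟨(x n).natAbs, le_refl _⟩
      rw [← hmono.measure_iUnion, huniv, measure_univ]
    exact exists_le_add_of_eq_iSup hsup ENNReal.one_ne_top
      (ENNReal.div_pos hε.ne' (by
        simp only [ne_eq]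
        exact ENNReal.pow_ne_top ENNReal.ofNat_ne_top))
  choose r hr using step
  refine ⟨{x : ℕ → ℤ | ∀ n, (x n).natAbs ≤ r n}, ?_, ?_⟩
  · have hcl : IsClosed {x : ℕ → ℤ | ∀ n, (x n).natAbs ≤ r n} := by
      have heq : {x : ℕ → ℤ | ∀ n, (x n).natAbs ≤ r n}
          = ⋂ n, (fun x : ℕ → ℤ => x n) ⁻¹' {v : ℤ | v.natAbs ≤ r n} := by
        ext x; simp
      rw [heq]
      exact isClosed_iInter fun n =>
        IsClosed.preimage (continuous_apply n) (isClosed_discrete _)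
    have hsub : {x : ℕ → ℤ | ∀ n, (x n).natAbs ≤ r n}
        ⊆ Set.pi Set.univ (fun n => {v : ℤ | v.natAbs ≤ r n}) := fun x hx n _ => hx n
    refine IsCompact.of_isClosed_subset (isCompact_univ_pi fun n => ?_) hcl hsub
    have : {v : ℤ | v.natAbs ≤ r n} ⊆ Set.Icc (-(r n : ℤ)) (r n) := by
      intro v hv
      simp only [Set.mem_setOf_eq] at hv
      constructor <;> omega
    exact (Set.finite_Icc _ _ |>.subset this).isCompact
  · have hcompl : {x : ℕ → ℤ | ∀ n, (x n).natAbs ≤ r n}ᶜ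
        = ⋃ n, {x : ℕ → ℤ | (x n).natAbs ≤ r n}ᶜ := by
      rw [← Set.compl_iInter]
      congr 1
      ext x; simp
    rw [hcompl]
    have hmeas : ∀ n, MeasurableSet {x : ℕ → ℤ | (x n).natAbs ≤ r n} := by
      intro n
      have : {x : ℕ → ℤ | (x n).natAbs ≤ r n}
          = (fun x : ℕ → ℤ => x n) ⁻¹' {v : ℤ | v.natAbs ≤ r n} := rfl
      rw [this]
      exact measurable_pi_apply n (MeasurableSet.of_discrete (s := {v : ℤ | v.natAbs ≤ r n}))
    calc μ (⋃ n, {x : ℕ → ℤ | (x n).natAbs ≤ r n}ᶜ)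
        ≤ ∑' n, μ ({x : ℕ → ℤ | (x n).natAbs ≤ r n}ᶜ) := measure_iUnion_le _
      _ ≤ ∑' n, ε / 2^(n+1) := by
          apply ENNReal.tsum_le_tsum
          intro n
          have := measure_compl (hmeas n) (measure_ne_top μ _)
          rw [this, measure_univ]
          rw [tsub_le_iff_right, add_comm]
          exact hr n
      _ ≤ ε := epshalf_tsum_le ε

lemma univMeasurable_proj {F : Set P2} (hF : IsClosed F) : UnivMeasurable (Prod.fst '' F) := by
  intro μ hμ
  haveI := hμ
  have hstep : ∀ k : ℕ, ∃ C : Set (ℕ → ℤ), IsClosed C ∧ C ⊆ Prod.fst '' F ∧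
      μ (Prod.fst '' F) ≤ μ C + 2 * 2⁻¹ ^ k := by
    intro k
    have hpos : (0:ℝ≥0∞) < 2⁻¹ ^ k :=
      ENNReal.pow_pos (ENNReal.inv_pos.mpr ENNReal.ofNat_ne_top) k
    obtain ⟨Z, hZc, hZm⟩ := tight μ hpos
    obtain ⟨h, hKc, hKm⟩ := core hF hZc μ hpos
    refine ⟨Prod.fst '' (F ∩ Z ×ˢ {y | ∀ i, y i ≤ h i}),
      (hKc.image continuous_fst).isClosed,
      Set.image_mono Set.inter_subset_left, ?_⟩
    have hsplit : μ (Prod.fst '' F) ≤ μ (Prod.fst '' (F ∩ Z ×ˢ univ)) + μ Zᶜ := by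
      refine le_trans (measure_mono ?_) (measure_union_le _ _)
      rintro x ⟨p, hp, rfl⟩
      by_cases hz : p.1 ∈ Z
      · exact Or.inl ⟨p, ⟨hp, hz, trivial⟩, rfl⟩
      · exact Or.inr hz
    calc μ (Prod.fst '' F) ≤ μ (Prod.fst '' (F ∩ Z ×ˢ univ)) + μ Zᶜ := hsplit
      _ ≤ (μ (Prod.fst '' (F ∩ Z ×ˢ {y | ∀ i, y i ≤ h i})) + 2⁻¹ ^ k) + 2⁻¹ ^ k :=
          add_le_add hKm hZm
      _ = μ (Prod.fst '' (F ∩ Z ×ˢ {y | ∀ i, y i ≤ h i})) + 2 * 2⁻¹ ^ k := by ring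
  choose C hCcl hCsub hCle using hstep
  set M := ⋃ k, C k with hMdef
  have hMmeas : MeasurableSet M := MeasurableSet.iUnion (fun k => (hCcl k).measurableSet)
  have hMsub : M ⊆ Prod.fst '' F := Set.iUnion_subset hCsub
  have hμM : μ (Prod.fst '' F) ≤ μ M := by
    apply ENNReal.le_of_forall_pos_le_add
    intro e he _
    obtain ⟨k, hk⟩ := ENNReal.exists_inv_two_pow_lt
      (show ((e:ℝ≥0∞)) ≠ 0 by exact_mod_cast he.ne')
    have h2 : 2 * (2:ℝ≥0∞)⁻¹ ^ (k+1) = 2⁻¹ ^ k := by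
      rw [pow_succ, ← mul_assoc, mul_comm (2:ℝ≥0∞), mul_assoc,
        ENNReal.mul_inv_cancel two_ne_zero ENNReal.ofNat_ne_top, mul_one]
    calc μ (Prod.fst '' F) ≤ μ (C (k+1)) + 2 * 2⁻¹ ^ (k+1) := hCle (k+1)
      _ ≤ μ M + (e:ℝ≥0∞) :=
          add_le_add (measure_mono (Set.subset_iUnion C (k+1))) (le_of_lt (h2 ▸ hk))
  have hTM : μ (toMeasurable μ (Prod.fst '' F) \ M) = 0 := by
    have hsub2 : M ⊆ toMeasurable μ (Prod.fst '' F) :=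
      subset_trans hMsub (subset_toMeasurable μ _)
    rw [measure_diff hsub2 hMmeas.nullMeasurableSet (measure_ne_top μ M),
      measure_toMeasurable]
    exact tsub_eq_zero_of_le hμM
  have hdiffnull : μ ((Prod.fst '' F) \ M) = 0 :=
    measure_mono_null (Set.diff_subset_diff_left (subset_toMeasurable μ _)) hTM
  have hAeq : Prod.fst '' F = M ∪ ((Prod.fst '' F) \ M) := (Set.union_diff_cancel hMsub).symm
  rw [hAeq]
  exact hMmeas.nullMeasurableSet.union (NullMeasurableSet.of_null hdiffnull)

def intToNat (m : ℤ) : ℕ := if 0 ≤ m then 2 * m.toNat else 2 * (-m).toNat - 1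

lemma natToInt_intToNat (m : ℤ) : natToInt (intToNat m) = m := by
  unfold natToInt intToNat
  split_ifs with h1 h2 h2 <;> push_cast <;> omega

lemma natAbs_le_intToNat (m : ℤ) : m.natAbs ≤ intToNat m := by
  unfold intToNat
  split_ifs with h <;> omega

/-- membership of a "bad" multiplier in the interval finset. -/
lemma badj_mem {qq ss w : ℤ} (hq : 0 ≤ qq) (h : |w * (qq+1) - ss| ≤ 2*qq) :
    w ∈ Finset.Icc ((ss - 2*qq) / (qq+1)) ((ss + 2*qq) / (qq+1)) := by
  have hpos : (0:ℤ) < qq + 1 := by omega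
  have habs := abs_le.mp h
  rw [Finset.mem_Icc]
  constructor
  · -- (ss - 2qq)/(qq+1) ≤ w
    have hdm := Int.mul_ediv_add_emod (ss - 2*qq) (qq+1)
    have hr0 : 0 ≤ (ss - 2*qq) % (qq+1) := Int.emod_nonneg _ (ne_of_gt hpos)
    have hkey : (qq+1) * ((ss - 2*qq) / (qq+1)) ≤ (qq+1) * w := by
      have h1 : (qq+1) * ((ss - 2*qq) / (qq+1)) ≤ ss - 2*qq := by omega
      have h2 : ss - 2*qq ≤ w * (qq+1) := by omega
      linarith [mul_comm w (qq+1)]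
    exact le_of_mul_le_mul_left hkey hpos
  · exact (Int.le_ediv_iff_mul_le hpos).mpr (by omega)

lemma badT_card {qq ss : ℤ} (hq : 0 ≤ qq) :
    (Finset.Icc ((ss - 2*qq) / (qq+1)) ((ss + 2*qq) / (qq+1))).card ≤ 5 := by
  have hpos : (0:ℤ) < qq + 1 := by omega
  set lo := (ss - 2*qq) / (qq+1) with hlo
  set hi := (ss + 2*qq) / (qq+1) with hhi
  have hdm1 : (qq+1) * lo + (ss - 2*qq) % (qq+1) = ss - 2*qq := by
    rw [hlo]; exact Int.mul_ediv_add_emod _ _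
  have hdm2 : (qq+1) * hi + (ss + 2*qq) % (qq+1) = ss + 2*qq := by
    rw [hhi]; exact Int.mul_ediv_add_emod _ _
  have hr1a : 0 ≤ (ss - 2*qq) % (qq+1) := Int.emod_nonneg _ (ne_of_gt hpos)
  have hr1b : (ss - 2*qq) % (qq+1) < qq+1 := Int.emod_lt_of_pos _ hpos
  have hr2a : 0 ≤ (ss + 2*qq) % (qq+1) := Int.emod_nonneg _ (ne_of_gt hpos)
  have hdiff : hi - lo ≤ 4 := by
    by_contra hcon
    push_neg at hcon
    have h5 : 5 ≤ hi - lo := hcon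
    have hkey : (qq+1) * 5 ≤ (qq+1) * (hi - lo) :=
      mul_le_mul_of_nonneg_left h5 (by omega)
    rw [mul_sub] at hkey
    have h1 : (qq+1) * hi ≤ ss + 2*qq := by linarith
    have h2 : ss - 2*qq - (qq+1) < (qq+1) * lo := by linarith
    linarith
  rw [Int.card_Icc]
  omega


end CSD

end

/-- Let `F ⊆ ℤ^ω × ω^ω` be closed with non-Haar-null projection `A`, and let
`ψ : 2^ω → K(ℤ^ω × ω^ω)` be any bijection onto the compact subsets. With
`bij f = (b, t, c)`, the set `D` of all `f` such that `(b,t,c) ∈ dom φ`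
(i.e. `c − t ∈ 2^ω`, `2b ≤* |t|`, `proj(ψ(c−t)) ⊆ Π_n [0, b n]`, and
`μ_b(proj(ψ(c−t))) > 0`) and `φ(b,t,c) = ψ(c−t) +ᵖ t ⊆ F`, is dominating. -/
theorem coding_set_dominating
    (F : Set ((ℕ → ℤ) × (ℕ → ℕ))) (hF : IsClosed F)
    (hA : ¬ IsHaarNull (Prod.fst '' F))
    (ψ : (ℕ → ℤ) → Set ((ℕ → ℤ) × (ℕ → ℕ)))
    (hψ : Set.BijOn ψ {z : ℕ → ℤ | ∀ n, z n = 0 ∨ z n = 1}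
      {K : Set ((ℕ → ℤ) × (ℕ → ℕ)) | IsCompact K}) :
    Dominating {f : ℕ → ℕ |
      (∀ n : ℕ, (bijMap f).2.2 n - (bijMap f).2.1 n = 0 ∨
        (bijMap f).2.2 n - (bijMap f).2.1 n = 1) ∧
      (∀ᶠ n in Filter.atTop, 2 * ((bijMap f).1 n : ℤ) ≤ |(bijMap f).2.1 n|) ∧
      (Prod.fst '' ψ ((bijMap f).2.2 - (bijMap f).2.1) ⊆
        {g : ℕ → ℤ | ∀ n, 0 ≤ g n ∧ g n ≤ ((bijMap f).1 n : ℤ)}) ∧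
      0 < muB (bijMap f).1 (Prod.fst '' ψ ((bijMap f).2.2 - (bijMap f).2.1)) ∧
      (fun p : (ℕ → ℤ) × (ℕ → ℕ) => (p.1 + (bijMap f).2.1, p.2)) ''
        ψ ((bijMap f).2.2 - (bijMap f).2.1) ⊆ F} := by
  intro f
  set q : ℕ → ℕ := fun n => max (f (3*n)) (max (f (3*n+1)) (f (3*n+2) + 1)) with hqdef
  set m : ℕ → ℕ := fun n => 5 * 2^(n+1) with hmdef
  set b : ℕ → ℕ := fun n => m n * (q n + 1) - 1 with hbdef
  set M : ℕ → ℕ := fun n => m n - 1 with hMdef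
  have hmpos : ∀ n, 0 < m n := by
    intro n
    simp only [hmdef]
    positivity
  have hb1 : ∀ i, b i + 1 = m i * (q i + 1) := by
    intro i
    have h2 : 0 < m i * (q i + 1) := Nat.mul_pos (hmpos i) (Nat.succ_pos _)
    simp only [hbdef]
    exact Nat.sub_add_cancel h2
  have hM1 : ∀ i, M i + 1 = m i := by
    intro i
    have := hmpos i
    simp only [hMdef]
    omega
  -- step 1: a translate with positive outer measure
  have hs : ∃ s : ℕ → ℤ, muB b ((fun x => x + s) '' (Prod.fst '' F)) ≠ 0 := by
    by_contra hcon
    push_neg at hcon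
    exact hA ⟨Prod.fst '' F, muB b, subset_rfl, CSD.univMeasurable_proj hF,
      CSD.muB_prob b, hcon⟩
  obtain ⟨s, hs0⟩ := hs
  -- the translated closed set
  set F' : Set CSD.P2 := (fun p : CSD.P2 => (p.1 - s, p.2)) ⁻¹' F with hF'def
  have hF'closed : IsClosed F' :=
    IsClosed.preimage ((continuous_fst.sub continuous_const).prodMk continuous_snd) hF
  have hproj : (fun x => x + s) '' (Prod.fst '' F)
      ⊆ Prod.fst '' (F' ∩ (CSD.Box b ×ˢ univ)) ∪ (CSD.Box b)ᶜ := by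
    rintro x ⟨x0, ⟨p, hpF, rfl⟩, rfl⟩
    by_cases hz : p.1 + s ∈ CSD.Box b
    · left
      refine ⟨(p.1 + s, p.2), ⟨?_, hz, trivial⟩, rfl⟩
      show ((p.1 + s) - s, p.2) ∈ F
      rw [add_sub_cancel_right]
      exact hpF
    · right
      exact hz
  set δ : ℝ≥0∞ := muB b (Prod.fst '' (F' ∩ (CSD.Box b ×ˢ univ))) with hδdef
  have hδpos : 0 < δ := by
    rcases eq_or_ne δ 0 with h0 | h0
    · exfalso
      apply hs0
      refine le_antisymm ?_ (zero_le)
      calc muB b ((fun x => x + s) '' (Prod.fst '' F))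
          ≤ muB b (Prod.fst '' (F' ∩ (CSD.Box b ×ˢ univ)) ∪ (CSD.Box b)ᶜ) :=
            measure_mono hproj
        _ ≤ muB b (Prod.fst '' (F' ∩ (CSD.Box b ×ˢ univ))) + muB b (CSD.Box b)ᶜ :=
            measure_union_le _ _
        _ = 0 := by rw [← hδdef, h0, CSD.muB_Box_compl, add_zero]
    · exact pos_iff_ne_zero.mpr h0
  obtain ⟨h, hKcomp, hKineq⟩ := CSD.core hF'closed (CSD.isCompact_Box b) (muB b)
    (ε := δ / 2) (ENNReal.half_pos hδpos.ne')
  set K : Set CSD.P2 := F' ∩ (CSD.Box b ×ˢ {y | ∀ i, y i ≤ h i}) with hKdef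
  set C : Set (ℕ → ℤ) := Prod.fst '' K with hCdef
  have hCcomp : IsCompact C := hKcomp.image continuous_fst
  have hCmeas : MeasurableSet C := hCcomp.isClosed.measurableSet
  have hCpos : 0 < muB b C := by
    by_contra hcon
    push_neg at hcon
    have h0 : muB b C = 0 := le_antisymm hcon (zero_le)
    rw [h0, zero_add] at hKineq
    exact absurd hKineq (not_le.mpr (ENNReal.half_lt_self hδpos.ne' (measure_ne_top _ _)))
  -- step 2: decomposition and Borel-Cantelli
  have hdecomp := CSD.muB_decomp q m b M hb1 hM1
  have hint : muB b C = ∫⁻ j, muB q (Prod.mk j ⁻¹' (CSD.addMul q ⁻¹' C)) ∂(muB M) := by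
    rw [hdecomp, Measure.map_apply (CSD.measurable_addMul q) hCmeas,
      Measure.prod_apply ((CSD.measurable_addMul q) hCmeas)]
  set T : ℕ → Finset ℤ := fun n =>
    Finset.Icc ((s n - 2*(q n:ℤ)) / ((q n:ℤ)+1)) ((s n + 2*(q n:ℤ)) / ((q n:ℤ)+1)) with hTdef
  set Ev : ℕ → Set (ℕ → ℤ) := fun n => {j : ℕ → ℤ | j n ∈ T n} with hEvdef
  have hEvle : ∀ n, muB M (Ev n) ≤ ((2:ℝ≥0∞))⁻¹ ^ (n+1) := by
    intro n
    have h1 : muB M (Ev n) ≤ ((T n).card : ℝ≥0∞) * ((M n + 1 : ℕ) : ℝ≥0∞)⁻¹ :=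
      CSD.muB_coord_finset n (T n)
    have hcard : (T n).card ≤ 5 := by
      simp only [hTdef]
      exact CSD.badT_card (by positivity)
    calc muB M (Ev n) ≤ ((T n).card : ℝ≥0∞) * ((M n + 1 : ℕ) : ℝ≥0∞)⁻¹ := h1
      _ ≤ 5 * ((M n + 1 : ℕ) : ℝ≥0∞)⁻¹ :=
          mul_le_mul_left (by exact_mod_cast hcard) _
      _ = ((2:ℝ≥0∞))⁻¹ ^ (n+1) := by
          rw [hM1 n]
          simp only [hmdef]
          push_cast
          rw [ENNReal.mul_inv (Or.inl (by norm_num)) (Or.inl (by norm_num)),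
            ← mul_assoc, ENNReal.mul_inv_cancel (by norm_num)
              (by exact (ENNReal.ofNat_ne_top)), one_mul, ENNReal.inv_pow]
  have htsum : (∑' n, muB M (Ev n)) ≠ ⊤ := by
    have hle := ENNReal.tsum_le_tsum hEvle
    rw [CSD.geom_tsum] at hle
    exact ne_top_of_le_ne_top ENNReal.one_ne_top hle
  have hlimsup : muB M (limsup Ev atTop) = 0 := measure_limsup_atTop_eq_zero htsum
  have hjex : ∃ j, j ∉ limsup Ev atTop
      ∧ 0 < muB q (Prod.mk j ⁻¹' (CSD.addMul q ⁻¹' C)) := by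
    by_contra hcon
    push_neg at hcon
    have hae : ∀ᵐ j ∂(muB M), muB q (Prod.mk j ⁻¹' (CSD.addMul q ⁻¹' C)) = 0 := by
      rw [ae_iff]
      refine measure_mono_null ?_ hlimsup
      intro j hj
      simp only [Set.mem_setOf_eq] at hj
      by_contra hmem
      exact hj (le_antisymm (hcon j hmem) (zero_le))
    have hzero : muB b C = 0 := by
      rw [hint, lintegral_congr_ae hae, lintegral_zero]
    exact hCpos.ne' hzero
  obtain ⟨j, hjgood, hjpos⟩ := hjex
  have hgoodN : ∃ N, ∀ k, N ≤ k → j ∉ Ev k := by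
    rw [limsup_eq_iInf_iSup_of_nat] at hjgood
    simp only [iInf_eq_iInter, iSup_eq_iUnion, Set.mem_iInter, Set.mem_iUnion, not_forall,
      not_exists] at hjgood
    obtain ⟨N, hN⟩ := hjgood
    exact ⟨N, fun k hk => hN k hk⟩
  obtain ⟨N, hN⟩ := hgoodN
  set σt : ℕ → ℤ := fun n => j n * ((q n : ℤ) + 1) with hσdef
  set t : ℕ → ℤ := fun n => σt n - s n with htdef
  have hgood' : ∀ k, N ≤ k → 2 * (q k : ℤ) + 1 ≤ |t k| := by
    intro k hk
    by_contra hcon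
    push_neg at hcon
    apply hN k hk
    show j k ∈ T k
    simp only [hTdef]
    apply CSD.badj_mem (by positivity)
    have hteq : t k = j k * ((q k:ℤ)+1) - s k := rfl
    rw [← hteq]
    omega
  -- step 3: build the compact witness
  set K2 : Set CSD.P2 := ((fun p : CSD.P2 => (p.1 - σt, p.2)) '' K) ∩ (CSD.Box q ×ˢ univ)
    with hK2def
  have hK2comp : IsCompact K2 :=
    (hKcomp.image ((continuous_fst.sub continuous_const).prodMk continuous_snd)).inter_right
      ((CSD.isClosed_Box q).prod isClosed_univ)
  have hprojK2 : Prod.fst '' K2 = (Prod.mk j ⁻¹' (CSD.addMul q ⁻¹' C)) ∩ CSD.Box q := by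
    ext x
    constructor
    · rintro ⟨p2, ⟨⟨p, hpK, rfl⟩, hbox, -⟩, rfl⟩
      refine ⟨?_, hbox⟩
      show CSD.addMul q (j, p.1 - σt) ∈ C
      have heq : CSD.addMul q (j, p.1 - σt) = p.1 := by
        funext n
        simp only [CSD.addMul, hσdef, Pi.sub_apply]
        ring
      rw [heq]
      exact ⟨p, hpK, rfl⟩
    · rintro ⟨hx1, hx2⟩
      obtain ⟨p, hpK, hp1⟩ := hx1
      have hxeq : p.1 - σt = x := by
        funext n
        have h1 : p.1 n = CSD.addMul q (j, x) n := by rw [hp1]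
        simp only [CSD.addMul] at h1
        simp only [Pi.sub_apply, hσdef]
        omega
      exact ⟨(p.1 - σt, p.2), ⟨⟨p, hpK, rfl⟩, by rw [hxeq]; exact hx2, trivial⟩, hxeq⟩
  have hmuprojK2 : 0 < muB q (Prod.fst '' K2) := by
    rw [hprojK2, CSD.meas_inter_conull (CSD.muB_Box_compl q)]
    exact hjpos
  have hprojK2box : Prod.fst '' K2 ⊆ CSD.Box q := by
    rw [hprojK2]
    exact Set.inter_subset_right
  have hK2F : ∀ p2 ∈ K2, (p2.1 + t, p2.2) ∈ F := by
    rintro p2 ⟨⟨p, hpK, rfl⟩, -⟩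
    have hpF' : p ∈ F' := hpK.1
    have heq : (p.1 - σt) + t = p.1 - s := by
      funext n
      simp only [Pi.add_apply, Pi.sub_apply, htdef]
      ring
    rw [heq]
    exact hpF'
  obtain ⟨z, hzdom, hzK⟩ := hψ.surjOn (show K2 ∈ {K : Set CSD.P2 | IsCompact K} from hK2comp)
  set c : ℕ → ℤ := fun n => t n + z n with hcdef
  set g : ℕ → ℕ := fun n' =>
    if n' % 3 = 0 then q (n'/3)
    else if n' % 3 = 1 then CSD.intToNat (t (n'/3)) else CSD.intToNat (c (n'/3)) with hgdef
  have hbij1 : (bijMap g).1 = q := by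
    funext n
    show g (3*n) = q n
    simp only [hgdef]
    rw [if_pos (by omega : (3*n) % 3 = 0), (by omega : (3*n)/3 = n)]
  have hbij2 : (bijMap g).2.1 = t := by
    funext n
    show natToInt (g (3*n+1)) = t n
    simp only [hgdef]
    rw [if_neg (by omega : ¬ (3*n+1) % 3 = 0), if_pos (by omega : (3*n+1) % 3 = 1),
      (by omega : (3*n+1)/3 = n)]
    exact CSD.natToInt_intToNat (t n)
  have hbij3 : (bijMap g).2.2 = c := by
    funext n
    show natToInt (g (3*n+2)) = c n
    simp only [hgdef]
    rw [if_neg (by omega : ¬ (3*n+2) % 3 = 0), if_neg (by omega : ¬ (3*n+2) % 3 = 1),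
      (by omega : (3*n+2)/3 = n)]
    exact CSD.natToInt_intToNat (c n)
  have hct : c - t = z := by
    funext n
    simp only [Pi.sub_apply, hcdef]
    ring
  refine ⟨g, ⟨?_, ?_, ?_, ?_, ?_⟩, ?_⟩
  · intro n
    rw [hbij3, hbij2]
    have hzn := hzdom n
    have : c n - t n = z n := by simp only [hcdef]; ring
    rw [this]
    exact hzn
  · rw [hbij1, hbij2]
    rw [eventually_atTop]
    refine ⟨N, fun k hk => ?_⟩
    have := hgood' k hk
    omega
  · rw [hbij3, hbij2, hct, hzK, hbij1]
    exact hprojK2box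
  · rw [hbij3, hbij2, hct, hzK, hbij1]
    exact hmuprojK2
  · rw [hbij3, hbij2, hct, hzK]
    rintro x ⟨p2, hp2, rfl⟩
    exact hK2F p2 hp2
  · rw [EvLE, eventually_atTop]
    refine ⟨3*N+3, fun n' hn' => ?_⟩
    have hk : N ≤ n'/3 := by omega
    have hqf0 : f (3*(n'/3)) ≤ q (n'/3) := le_max_left _ _
    have hqf1 : f (3*(n'/3)+1) ≤ q (n'/3) := le_trans (le_max_left _ _) (le_max_right _ _)
    have hqf2 : f (3*(n'/3)+2) + 1 ≤ q (n'/3) := le_trans (le_max_right _ _) (le_max_right _ _)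
    have habs : 2 * q (n'/3) + 1 ≤ (t (n'/3)).natAbs := by
      have h1 := hgood' (n'/3) hk
      have h2 : |t (n'/3)| = ((t (n'/3)).natAbs : ℤ) := Int.abs_eq_natAbs _
      omega
    have h3 : n' % 3 = 0 ∨ n' % 3 = 1 ∨ n' % 3 = 2 := by omega
    rcases h3 with h3 | h3 | h3
    · have hgval : g n' = q (n'/3) := by simp only [hgdef]; rw [if_pos h3]
      have hfeq : f n' = f (3*(n'/3)) := by congr 1; omega
      rw [hgval, hfeq]
      exact hqf0
    · have hgval : g n' = CSD.intToNat (t (n'/3)) := by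
        simp only [hgdef]
        rw [if_neg (by omega), if_pos h3]
      have hfeq : f n' = f (3*(n'/3)+1) := by congr 1; omega
      rw [hgval, hfeq]
      have := CSD.natAbs_le_intToNat (t (n'/3))
      omega
    · have hgval : g n' = CSD.intToNat (c (n'/3)) := by
        simp only [hgdef]
        rw [if_neg (by omega), if_neg (by omega)]
      have hfeq : f n' = f (3*(n'/3)+2) := by congr 1; omega
      rw [hgval, hfeq]
      have hzn := hzdom (n'/3)
      have hceq : c (n'/3) = t (n'/3) + z (n'/3) := rfl
      have := CSD.natAbs_le_intToNat (c (n'/3))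
      omega
end
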